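/- arXiv:1206.6053 — 8 statements merged into one kernel-verified Lean document; each statement's English description precedes it below -/
import Mathlib

section
/- Let (Ω,P) be a probability space and let μ̂_T, θ̂_T (T ∈ ℕ) be real random variables with μ̂_T → μ in probability and θ̂_T → θ in probability, where μ > 0 and θ > 0. Let Ψ : ℝ → ℝ be non-increasing with 0 ≤ Ψ(x) ≤ 1 for all x, let K : ℕ → ℝ be positive and increasing, and suppose √T·Ψ(K(T)·x) → 0 as T → ∞ for every fixed x > 0. Then √T·Ψ(K(T)·θ̂_T·μ̂_T) → 0 in probability as T → ∞. (Lemma 1, part 1.) -/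
open MeasureTheory Filter Topology ProbabilityTheory Matrix

noncomputable section

/-- Convergence in probability to a constant `c`: for every `ε > 0`,
`P(|X_T − c| > ε) → 0` as `T → ∞`. -/
def TendstoInProb {Ω : Type*} [MeasurableSpace Ω] (P : Measure Ω)
    (X : ℕ → Ω → ℝ) (c : ℝ) : Prop :=
  ∀ ε : ℝ, 0 < ε →
    Tendsto (fun T => P {ω | ε < |X T ω - c|}) atTop (nhds 0)

/-- Lemma 1, part 1: for `μ > 0`, `√T·Ψ(K(T)·θ̂_T·μ̂_T) → 0` in probability. -/
theorem smoothed_indicator_vanishes_on_positives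
    {Ω : Type*} [MeasurableSpace Ω] (P : Measure Ω) [IsProbabilityMeasure P]
    (μhat θhat : ℕ → Ω → ℝ) (μ θ : ℝ) (hμ : 0 < μ) (hθ : 0 < θ)
    (hμhat : TendstoInProb P μhat μ) (hθhat : TendstoInProb P θhat θ)
    (Ψ : ℝ → ℝ) (hΨanti : Antitone Ψ) (hΨ01 : ∀ x : ℝ, 0 ≤ Ψ x ∧ Ψ x ≤ 1)
    (K : ℕ → ℝ) (hKpos : ∀ T, 0 < K T) (hKmono : StrictMono K)
    (hA6 : ∀ x : ℝ, 0 < x →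
      Tendsto (fun T : ℕ => Real.sqrt T * Ψ (K T * x)) atTop (nhds 0)) :
    TendstoInProb P
      (fun T ω => Real.sqrt T * Ψ (K T * (θhat T ω * μhat T ω))) 0 := by
  intro ε hε
  set δ : ℝ := min (θ / 2) (μ / 2) with hδdef
  have hδpos : 0 < δ := lt_min (by linarith) (by linarith)
  set c : ℝ := (θ / 2) * (μ / 2) with hcdef
  have hcpos : 0 < c := mul_pos (by linarith) (by linarith)
  have h6 := hA6 c hcpos
  have hev : ∀ᶠ T : ℕ in atTop, Real.sqrt T * Ψ (K T * c) < ε := by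
    exact h6.eventually (gt_mem_nhds hε)
  -- subset bound, eventually
  have hsub : ∀ᶠ T : ℕ in atTop,
      P {ω | ε < |Real.sqrt T * Ψ (K T * (θhat T ω * μhat T ω)) - 0|}
        ≤ P {ω | δ < |θhat T ω - θ|} + P {ω | δ < |μhat T ω - μ|} := by
    filter_upwards [hev] with T hT
    refine le_trans (measure_mono ?_) (measure_union_le _ _)
    intro ω hω
    simp only [Set.mem_setOf_eq, sub_zero] at hω
    by_contra hc'
    simp only [Set.mem_union, Set.mem_setOf_eq, not_or, not_lt] at hc'
    obtain ⟨h1, h2⟩ := hc'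
    have hθω : θ / 2 ≤ θhat T ω := by
      have := abs_le.mp h1
      have : θ - δ ≤ θhat T ω := by linarith [this.1]
      have hδθ : δ ≤ θ / 2 := min_le_left _ _
      linarith
    have hμω : μ / 2 ≤ μhat T ω := by
      have := abs_le.mp h2
      have : μ - δ ≤ μhat T ω := by linarith [this.1]
      have hδμ : δ ≤ μ / 2 := min_le_right _ _
      linarith
    have hprod : c ≤ θhat T ω * μhat T ω :=
      mul_le_mul hθω hμω (by linarith) (le_trans (by linarith) hθω)
    have hKc : K T * c ≤ K T * (θhat T ω * μhat T ω) :=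
      mul_le_mul_of_nonneg_left hprod (hKpos T).le
    have hΨle : Ψ (K T * (θhat T ω * μhat T ω)) ≤ Ψ (K T * c) := hΨanti hKc
    have hX : Real.sqrt T * Ψ (K T * (θhat T ω * μhat T ω)) ≤ Real.sqrt T * Ψ (K T * c) :=
      mul_le_mul_of_nonneg_left hΨle (Real.sqrt_nonneg _)
    have hXnn : 0 ≤ Real.sqrt T * Ψ (K T * (θhat T ω * μhat T ω)) :=
      mul_nonneg (Real.sqrt_nonneg _) (hΨ01 _).1
    rw [abs_of_nonneg hXnn] at hω
    linarith
  have hsum : Tendsto (fun T => P {ω | δ < |θhat T ω - θ|} + P {ω | δ < |μhat T ω - μ|})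
      atTop (nhds 0) := by
    have := (hθhat δ hδpos).add (hμhat δ hδpos)
    simpa using this
  exact tendsto_of_tendsto_of_tendsto_of_le_of_le' tendsto_const_nhds hsum
    (Eventually.of_forall fun T => zero_le) hsub

end
end

section
/- Let (Ω,P) be a probability space and let μ̂_T, θ̂_T (T ∈ ℕ) be real random variables with μ̂_T → μ in probability and θ̂_T → θ in probability, where μ < 0 and θ > 0. Let Ψ : ℝ → ℝ be non-increasing with 0 ≤ Ψ(x) ≤ 1 for all x and Ψ(x) → 1 as x → −∞, and let K : ℕ → ℝ be positive and increasing with K(T) → ∞. Then Ψ(K(T)·θ̂_T·μ̂_T) → 1 in probability as T → ∞. (Lemma 1, part 3.) -/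
open MeasureTheory Filter Topology ProbabilityTheory Matrix

noncomputable section

/-- Lemma 1, part 3: for `μ < 0`, `Ψ(K(T)·θ̂_T·μ̂_T) → 1` in probability. -/
theorem smoothed_indicator_tendsto_one_on_negatives
    {Ω : Type*} [MeasurableSpace Ω] (P : Measure Ω) [IsProbabilityMeasure P]
    (μhat θhat : ℕ → Ω → ℝ) (μ θ : ℝ) (hμ : μ < 0) (hθ : 0 < θ)
    (hμhat : TendstoInProb P μhat μ) (hθhat : TendstoInProb P θhat θ)
    (Ψ : ℝ → ℝ) (hΨanti : Antitone Ψ) (hΨ01 : ∀ x : ℝ, 0 ≤ Ψ x ∧ Ψ x ≤ 1)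
    (hΨbot : Tendsto Ψ atBot (nhds 1))
    (K : ℕ → ℝ) (hKpos : ∀ T, 0 < K T) (hKmono : StrictMono K)
    (hKtop : Tendsto K atTop atTop) :
    TendstoInProb P (fun T ω => Ψ (K T * (θhat T ω * μhat T ω))) 1 := by
  intro ε hε
  -- choose M such that Ψ x > 1 - ε for x ≤ M
  have hbot : ∀ᶠ x in atBot, Ψ x > 1 - ε :=
    hΨbot.eventually (eventually_gt_nhds (by linarith))
  obtain ⟨M, hM⟩ := eventually_atBot.mp hbot
  -- eventually K T * (θ*μ/4) ≤ M
  have hKev : ∀ᶠ T in atTop, 4 * M / (θ * μ) ≤ K T := hKtop.eventually_ge_atTop _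
  have hsum : Tendsto (fun T => P {ω | θ / 2 < |θhat T ω - θ|}
      + P {ω | -μ / 2 < |μhat T ω - μ|}) atTop (nhds 0) := by
    have := (hθhat (θ / 2) (by linarith)).add (hμhat (-μ / 2) (by linarith))
    simpa using this
  apply tendsto_of_tendsto_of_tendsto_of_le_of_le' tendsto_const_nhds hsum
    (Eventually.of_forall fun T => zero_le)
  filter_upwards [hKev] with T hKT
  refine (measure_mono ?_).trans (measure_union_le _ _)
  intro ω hω
  simp only [Set.mem_setOf_eq, Set.mem_union] at hω ⊢
  by_contra hcon
  push_neg at hcon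
  obtain ⟨h1, h2⟩ := hcon
  -- so θhat ≥ θ/2 > 0 and μhat ≤ μ/2 < 0
  have hθb : θ / 2 ≤ θhat T ω := by
    have := abs_le.mp h1; linarith [this.1]
  have hμb : μhat T ω ≤ μ / 2 := by
    have := abs_le.mp h2; linarith [this.2]
  have hprod : θhat T ω * μhat T ω ≤ θ * μ / 4 := by nlinarith
  have harg : K T * (θhat T ω * μhat T ω) ≤ M := by
    have hK := hKpos T
    have h1 : K T * (θhat T ω * μhat T ω) ≤ K T * (θ * μ / 4) := by nlinarith
    have h2 : K T * (θ * μ / 4) ≤ M := by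
      have hθμ : θ * μ < 0 := mul_neg_of_pos_of_neg hθ hμ
      have hc : θ * μ / 4 ≤ 0 := by linarith
      have hmul := mul_le_mul_of_nonpos_right hKT hc
      have heq : 4 * M / (θ * μ) * (θ * μ / 4) = M := by
        rw [div_mul_eq_mul_div, div_eq_iff hθμ.ne]; ring
      linarith
    linarith
  have hΨM := hM _ harg
  have h01 := hΨ01 (K T * (θhat T ω * μhat T ω))
  have habs : |Ψ (K T * (θhat T ω * μhat T ω)) - 1| = 1 - Ψ (K T * (θhat T ω * μhat T ω)) := by
    rw [abs_of_nonpos (by linarith [h01.2])]; ring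
  rw [habs] at hω
  linarith
end
end

section
/- Let (Ω,P) be a probability space and let μ̂_T, θ̂_T (T ∈ ℕ) be real random variables with μ̂_T → μ in probability and θ̂_T → θ in probability, where μ > 0 and θ > 0. Let Ψ : ℝ → ℝ be non-increasing with 0 ≤ Ψ(x) ≤ 1 for all x, let K : ℕ → ℝ be positive and increasing, and suppose √T·Ψ(K(T)·x) → 0 as T → ∞ for every fixed x > 0. Then √T·Ψ(K(T)·θ̂_T·μ̂_T)·θ̂_T·μ̂_T → 0 in probability as T → ∞. (Lemma 2, part i.) -/
open MeasureTheory Filter Topology ProbabilityTheory Matrix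

noncomputable section

/-- Lemma 2, part i: for `μ > 0`, `√T·Ψ(K(T)·θ̂_T·μ̂_T)·θ̂_T·μ̂_T → 0` in probability. -/
theorem smoothed_statistic_vanishes_on_positives
    {Ω : Type*} [MeasurableSpace Ω] (P : Measure Ω) [IsProbabilityMeasure P]
    (μhat θhat : ℕ → Ω → ℝ) (μ θ : ℝ) (hμ : 0 < μ) (hθ : 0 < θ)
    (hμhat : TendstoInProb P μhat μ) (hθhat : TendstoInProb P θhat θ)
    (Ψ : ℝ → ℝ) (hΨanti : Antitone Ψ) (hΨ01 : ∀ x : ℝ, 0 ≤ Ψ x ∧ Ψ x ≤ 1)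
    (K : ℕ → ℝ) (hKpos : ∀ T, 0 < K T) (hKmono : StrictMono K)
    (hA6 : ∀ x : ℝ, 0 < x →
      Tendsto (fun T : ℕ => Real.sqrt T * Ψ (K T * x)) atTop (nhds 0)) :
    TendstoInProb P
      (fun T ω => Real.sqrt T * Ψ (K T * (θhat T ω * μhat T ω)) *
        (θhat T ω * μhat T ω)) 0 := by
  intro ε hε
  set δ := min (θ / 2) (μ / 2) with hδdef
  have hδpos : 0 < δ := lt_min (by linarith) (by linarith)
  have hδθ : δ ≤ θ / 2 := min_le_left _ _
  have hδμ : δ ≤ μ / 2 := min_le_right _ _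
  set c := θ * μ / 4 with hcdef
  set B := (3 * θ / 2) * (3 * μ / 2) with hBdef
  have hc : 0 < c := by positivity
  have hB : 0 < B := by positivity
  have hεB : 0 < ε / B := by positivity
  have hev : ∀ᶠ T : ℕ in atTop, Real.sqrt T * Ψ (K T * c) < ε / B :=
    (hA6 c hc).eventually (gt_mem_nhds hεB)
  have hg : Tendsto (fun T => P {ω | δ < |θhat T ω - θ|} + P {ω | δ < |μhat T ω - μ|})
      atTop (nhds 0) := by
    simpa using (hθhat δ hδpos).add (hμhat δ hδpos)
  have key : ∀ᶠ T : ℕ in atTop,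
      P {ω | ε < |Real.sqrt T * Ψ (K T * (θhat T ω * μhat T ω)) *
          (θhat T ω * μhat T ω) - 0|}
        ≤ P {ω | δ < |θhat T ω - θ|} + P {ω | δ < |μhat T ω - μ|} := by
    filter_upwards [hev] with T hT
    refine le_trans (measure_mono ?_) (measure_union_le _ _)
    intro ω hω
    simp only [Set.mem_setOf_eq, sub_zero] at hω
    by_contra hcon
    simp only [Set.mem_union, Set.mem_setOf_eq, not_or, not_lt] at hcon
    obtain ⟨h1, h2⟩ := hcon
    have hθb : θ / 2 ≤ θhat T ω ∧ θhat T ω ≤ 3 * θ / 2 := by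
      constructor <;> [nlinarith [abs_le.mp h1]; nlinarith [abs_le.mp h1]]
    have hμb : μ / 2 ≤ μhat T ω ∧ μhat T ω ≤ 3 * μ / 2 := by
      constructor <;> [nlinarith [abs_le.mp h2]; nlinarith [abs_le.mp h2]]
    set p := θhat T ω * μhat T ω with hpdef
    have hpc : c ≤ p := by
      rw [hcdef, hpdef]; nlinarith [hθb.1, hθb.2, hμb.1, hμb.2]
    have hpB : p ≤ B := by
      rw [hBdef, hpdef]; nlinarith [hθb.1, hθb.2, hμb.1, hμb.2]
    have hppos : 0 < p := lt_of_lt_of_le hc hpc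
    have hΨle : Ψ (K T * p) ≤ Ψ (K T * c) :=
      hΨanti (mul_le_mul_of_nonneg_left hpc (hKpos T).le)
    have hsqrt : 0 ≤ Real.sqrt T := Real.sqrt_nonneg _
    have hΨp := (hΨ01 (K T * p)).1
    have hΨc := (hΨ01 (K T * c)).1
    have habs : |Real.sqrt T * Ψ (K T * p) * p| = Real.sqrt T * Ψ (K T * p) * p := by
      exact abs_of_nonneg (by positivity)
    rw [habs] at hω
    have hle : Real.sqrt T * Ψ (K T * p) * p ≤ Real.sqrt T * Ψ (K T * c) * B := by
      have h1 : Real.sqrt T * Ψ (K T * p) ≤ Real.sqrt T * Ψ (K T * c) :=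
        mul_le_mul_of_nonneg_left hΨle hsqrt
      exact mul_le_mul h1 hpB hppos.le (by positivity)
    have hlt : Real.sqrt T * Ψ (K T * c) * B < (ε / B) * B :=
      mul_lt_mul_of_pos_right hT hB
    rw [div_mul_cancel₀ _ hB.ne'] at hlt
    linarith
  exact tendsto_of_tendsto_of_tendsto_of_le_of_le' tendsto_const_nhds hg
    (Eventually.of_forall fun T => zero_le) key

end
end

section
/- Let (Ω,P) be a probability space and let μ̂_T, θ̂_T (T ∈ ℕ) be real random variables with μ̂_T → μ in probability where μ < 0, the sequence √T·(μ̂_T − μ) bounded in probability, and θ̂_T → θ in probability with θ > 0. Let Ψ : ℝ → ℝ be non-increasing with 0 ≤ Ψ(x) ≤ 1 for all x and Ψ(x) → 1 as x → −∞, and let K : ℕ → ℝ be positive and increasing with K(T) → ∞. Then √T·Ψ(K(T)·θ̂_T·μ̂_T)·θ̂_T·μ̂_T → −∞ in probability: for every C ∈ ℝ, P(√T·Ψ(K(T)·θ̂_T·μ̂_T)·θ̂_T·μ̂_T < C) → 1 as T → ∞. (Lemma 2, part iii.) -/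
open MeasureTheory Filter Topology ProbabilityTheory Matrix

noncomputable section

/-- Bounded in probability: for every `η > 0` there are `M > 0` and `T₀` such that
`P(|X_T| > M) ≤ η` for all `T ≥ T₀`. -/
def BoundedInProb {Ω : Type*} [MeasurableSpace Ω] (P : Measure Ω)
    (X : ℕ → Ω → ℝ) : Prop :=
  ∀ η : ℝ, 0 < η → ∃ M : ℝ, 0 < M ∧ ∃ T₀ : ℕ, ∀ T ≥ T₀,
    P {ω | M < |X T ω|} ≤ ENNReal.ofReal η

/-- Lemma 2, part iii: for `μ < 0`, `√T·Ψ(K(T)·θ̂_T·μ̂_T)·θ̂_T·μ̂_T → −∞` in probability: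
for every `C`, `P(√T·Ψ(K(T)·θ̂_T·μ̂_T)·θ̂_T·μ̂_T < C) → 1`. -/
theorem smoothed_statistic_tendsto_neg_infty_on_negatives
    {Ω : Type*} [MeasurableSpace Ω] (P : Measure Ω) [IsProbabilityMeasure P]
    (μhat θhat : ℕ → Ω → ℝ) (μ θ : ℝ) (hμ : μ < 0) (hθ : 0 < θ)
    (hμhat : TendstoInProb P μhat μ)
    (hμhatbd : BoundedInProb P (fun T ω => Real.sqrt T * (μhat T ω - μ)))
    (hθhat : TendstoInProb P θhat θ)
    (Ψ : ℝ → ℝ) (hΨanti : Antitone Ψ) (hΨ01 : ∀ x : ℝ, 0 ≤ Ψ x ∧ Ψ x ≤ 1)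
    (hΨbot : Tendsto Ψ atBot (nhds 1))
    (K : ℕ → ℝ) (hKpos : ∀ T, 0 < K T) (hKmono : StrictMono K)
    (hKtop : Tendsto K atTop atTop) :
    ∀ C : ℝ,
      Tendsto (fun T : ℕ => P {ω | Real.sqrt T * Ψ (K T * (θhat T ω * μhat T ω)) *
        (θhat T ω * μhat T ω) < C}) atTop (nhds 1) := by
  intro C
  set ε₁ : ℝ := -μ / 2 with hε₁
  set ε₂ : ℝ := θ / 2 with hε₂
  have hε₁pos : 0 < ε₁ := by simp only [hε₁]; linarith
  have hε₂pos : 0 < ε₂ := by positivity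
  set m : ℝ := θ * μ / 4 with hm
  have hmneg : m < 0 := by
    have := mul_pos hθ (neg_pos.mpr hμ)
    simp only [hm]; nlinarith
  -- choose x₀ with Ψ x ≥ 1/2 for x ≤ x₀
  obtain ⟨x₀, hx₀⟩ : ∃ x₀ : ℝ, ∀ x ≤ x₀, (1:ℝ)/2 ≤ Ψ x :=
    eventually_atBot.mp (hΨbot.eventually (eventually_ge_nhds (by norm_num)))
  -- eventualities in T
  have hKm : Tendsto (fun T => K T * m) atTop atBot :=
    hKtop.atTop_mul_const_of_neg hmneg
  have hsqrtR : Tendsto Real.sqrt atTop atTop := by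
    refine tendsto_atTop_atTop.mpr fun b => ⟨b ^ 2, fun x hx => ?_⟩
    calc b ≤ |b| := le_abs_self b
      _ = Real.sqrt (b ^ 2) := (Real.sqrt_sq_eq_abs b).symm
      _ ≤ Real.sqrt x := Real.sqrt_le_sqrt hx
  have hsqrt : Tendsto (fun T : ℕ => Real.sqrt T) atTop atTop :=
    hsqrtR.comp tendsto_natCast_atTop_atTop
  have hsm : Tendsto (fun T : ℕ => Real.sqrt T * (m / 2)) atTop atBot :=
    hsqrt.atTop_mul_const_of_neg (by linarith)
  have hev : ∀ᶠ T : ℕ in atTop, K T * m ≤ x₀ ∧ Real.sqrt T * (m / 2) < C :=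
    (hKm.eventually_le_atBot x₀).and (hsm.eventually_lt_atBot C)
  -- main squeeze
  have hsub : ∀ᶠ T : ℕ in atTop,
      1 - (P {ω | ε₁ < |μhat T ω - μ|} + P {ω | ε₂ < |θhat T ω - θ|})
        ≤ P {ω | Real.sqrt T * Ψ (K T * (θhat T ω * μhat T ω)) *
            (θhat T ω * μhat T ω) < C} := by
    filter_upwards [hev] with T ⟨hT1, hT2⟩
    set E : Set Ω := {ω | Real.sqrt T * Ψ (K T * (θhat T ω * μhat T ω)) *
        (θhat T ω * μhat T ω) < C}
    have hincl : {ω : Ω | ε₁ < |μhat T ω - μ|}ᶜ ∩ {ω : Ω | ε₂ < |θhat T ω - θ|}ᶜ ⊆ E := by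
      rintro ω ⟨h1, h2⟩
      simp only [Set.mem_compl_iff, Set.mem_setOf_eq, not_lt] at h1 h2
      have hμω : μhat T ω ≤ μ / 2 := by
        have := abs_le.mp h1
        simp only [hε₁] at this; linarith [this.2]
      have hθω : θ / 2 ≤ θhat T ω := by
        have := abs_le.mp h2
        simp only [hε₂] at this; linarith [this.1]
      have hμωneg : μhat T ω < 0 := by linarith
      have hp : θhat T ω * μhat T ω ≤ m := by
        have h1' : θhat T ω * μhat T ω ≤ (θ / 2) * μhat T ω :=
          mul_le_mul_of_nonpos_right hθω (le_of_lt hμωneg)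
        have h2' : (θ / 2) * μhat T ω ≤ (θ / 2) * (μ / 2) :=
          mul_le_mul_of_nonneg_left hμω (by linarith)
        simp only [hm]; nlinarith
      have hKp : K T * (θhat T ω * μhat T ω) ≤ x₀ :=
        le_trans (mul_le_mul_of_nonneg_left hp (le_of_lt (hKpos T))) hT1
      have hΨhalf : (1:ℝ)/2 ≤ Ψ (K T * (θhat T ω * μhat T ω)) := hx₀ _ hKp
      have hpneg : θhat T ω * μhat T ω < 0 := lt_of_le_of_lt hp hmneg
      have hΨp : Ψ (K T * (θhat T ω * μhat T ω)) * (θhat T ω * μhat T ω)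
          ≤ (1/2) * (θhat T ω * μhat T ω) :=
        mul_le_mul_of_nonpos_right hΨhalf (le_of_lt hpneg)
      have hsT : 0 ≤ Real.sqrt T := Real.sqrt_nonneg _
      show Real.sqrt T * Ψ (K T * (θhat T ω * μhat T ω)) * (θhat T ω * μhat T ω) < C
      calc Real.sqrt T * Ψ (K T * (θhat T ω * μhat T ω)) * (θhat T ω * μhat T ω)
          = Real.sqrt T * (Ψ (K T * (θhat T ω * μhat T ω)) * (θhat T ω * μhat T ω)) := by
            ring
        _ ≤ Real.sqrt T * ((1/2) * (θhat T ω * μhat T ω)) :=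
            mul_le_mul_of_nonneg_left hΨp hsT
        _ ≤ Real.sqrt T * ((1/2) * m) := by
            apply mul_le_mul_of_nonneg_left _ hsT
            nlinarith
        _ = Real.sqrt T * (m / 2) := by ring
        _ < C := hT2
    have huniv : (1 : ENNReal) ≤
        P {ω : Ω | ε₁ < |μhat T ω - μ|} + P {ω : Ω | ε₂ < |θhat T ω - θ|} + P E := by
      have : (Set.univ : Set Ω) ⊆
          {ω : Ω | ε₁ < |μhat T ω - μ|} ∪ ({ω : Ω | ε₂ < |θhat T ω - θ|} ∪ E) := by
        intro ω _
        by_cases h1 : ε₁ < |μhat T ω - μ|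
        · exact Or.inl h1
        by_cases h2 : ε₂ < |θhat T ω - θ|
        · exact Or.inr (Or.inl h2)
        · exact Or.inr (Or.inr (hincl ⟨h1, h2⟩))
      calc (1 : ENNReal) = P Set.univ := (measure_univ).symm
        _ ≤ P ({ω : Ω | ε₁ < |μhat T ω - μ|} ∪ ({ω : Ω | ε₂ < |θhat T ω - θ|} ∪ E)) :=
            measure_mono this
        _ ≤ P {ω : Ω | ε₁ < |μhat T ω - μ|} + P ({ω : Ω | ε₂ < |θhat T ω - θ|} ∪ E) :=
            measure_union_le _ _
        _ ≤ P {ω : Ω | ε₁ < |μhat T ω - μ|} +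
            (P {ω : Ω | ε₂ < |θhat T ω - θ|} + P E) := by
            gcongr; exact measure_union_le _ _
        _ = _ := by ring
    exact tsub_le_iff_left.mpr huniv
  have hlower : Tendsto (fun T : ℕ =>
      1 - (P {ω | ε₁ < |μhat T ω - μ|} + P {ω | ε₂ < |θhat T ω - θ|})) atTop (nhds 1) := by
    have hsum : Tendsto (fun T : ℕ =>
        P {ω | ε₁ < |μhat T ω - μ|} + P {ω | ε₂ < |θhat T ω - θ|}) atTop (nhds 0) := by
      have := (hμhat ε₁ hε₁pos).add (hθhat ε₂ hε₂pos)
      simpa using this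
    have := ENNReal.Tendsto.sub (tendsto_const_nhds (x := (1:ENNReal))) hsum
      (Or.inl (by simp))
    simpa using this
  refine tendsto_of_tendsto_of_tendsto_of_le_of_le' hlower tendsto_const_nhds hsub ?_
  exact Eventually.of_forall fun T => prob_le_one

end
end

section
/- Let Ψ, ψ̃, a₁ < … < aₙ, b_Ψ and Λ_T be as in the piecewise-smooth indicator setup, and let K : ℕ → ℝ be positive with K(T)/√T → 0 as T → ∞. On a probability space (Ω,P), let v̂_T be almost surely nonnegative real random variables with v̂_T → v in probability for some v ≥ 0, let θ̂_T be almost surely positive real random variables with θ̂_T → θ in probability for some θ > 0, and let μ̂_T be arbitrary real random variables. Then Λ_T(θ̂_T·μ̂_T, θ̂_T²·v̂_T) → 0 in probability as T → ∞. (Lemma 3.) -/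
open MeasureTheory Filter Topology ProbabilityTheory Matrix

noncomputable section

/-- The standard normal density `φ(x) = exp(−x²/2)/√(2π)`. -/
def normalPDF (x : ℝ) : ℝ := Real.exp (-(x ^ 2) / 2) / Real.sqrt (2 * Real.pi)

/-- The adjustment term
`Λ_T(m, v) = v·ψ̃(K(T)·m)·K(T)/√T − √v·Σᵢ (Ψ(aᵢ⁻) − Ψ(aᵢ⁺))·φ(aᵢ·√T/(√v·K(T)))`,
where `ψt` is the left-limit of the derivative of `Ψ` and `ΨL i`, `ΨR i` are the
one-sided limits of `Ψ` at the discontinuity points `a i`. -/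
def Lambda (K : ℕ → ℝ) (ψt : ℝ → ℝ) {n : ℕ} (a ΨL ΨR : Fin n → ℝ)
    (T : ℕ) (m v : ℝ) : ℝ :=
  v * ψt (K T * m) * K T / Real.sqrt T -
    Real.sqrt v * ∑ i, (ΨL i - ΨR i) * normalPDF (a i * Real.sqrt T / (Real.sqrt v * K T))

def Dbound (K : ℕ → ℝ) {n : ℕ} (a ΨL ΨR : Fin n → ℝ) (bΨ M : ℝ) (T : ℕ) : ℝ :=
  M ^ 2 * bΨ * (K T / Real.sqrt T) +
    ∑ i, M * |ΨL i - ΨR i| *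
      (Real.exp (-(a i ^ 2 / (2 * M ^ 2)) * (Real.sqrt T / K T) ^ 2) / Real.sqrt (2 * Real.pi))

lemma psit_bound (ψ ψt : ℝ → ℝ) {n : ℕ} (a : Fin n → ℝ) (bΨ : ℝ)
    (hψbd : ∀ x ∉ Set.range a, |ψ x| ≤ bΨ)
    (hψt : ∀ x : ℝ, Tendsto ψ (nhdsWithin x (Set.Iio x)) (nhds (ψt x))) :
    ∀ x : ℝ, |ψt x| ≤ bΨ := by
  intro x
  have hfin : (Set.range a \ {x}).Finite := (Set.finite_range a).diff
  have hmem : (Set.range a)ᶜ ∈ nhdsWithin x (Set.Iio x) := by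
    rw [mem_nhdsWithin]
    refine ⟨(Set.range a \ {x})ᶜ, hfin.isClosed.isOpen_compl, by simp, ?_⟩
    rintro y ⟨hy1, hy2⟩ hy3
    exact hy1 ⟨hy3, fun h => (ne_of_lt hy2) h⟩
  have hev : ∀ᶠ y in nhdsWithin x (Set.Iio x), |ψ y| ≤ bΨ :=
    Filter.eventually_of_mem hmem (fun y hy => hψbd y hy)
  exact le_of_tendsto (hψt x).abs hev

lemma normalPDF_nonneg (x : ℝ) : 0 ≤ normalPDF x :=
  div_nonneg (Real.exp_pos _).le (Real.sqrt_nonneg _)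

lemma lambda_abs_le (K : ℕ → ℝ) (ψt : ℝ → ℝ) {n : ℕ} (a ΨL ΨR : Fin n → ℝ) (bΨ M : ℝ)
    (hbψt : ∀ x, |ψt x| ≤ bΨ) (hbΨ0 : 0 ≤ bΨ) (hM : 0 < M) (T : ℕ) (hK : 0 < K T)
    (m w : ℝ) (hw0 : 0 ≤ w) (hwM : w ≤ M ^ 2) :
    |Lambda K ψt a ΨL ΨR T m w| ≤ Dbound K a ΨL ΨR bΨ M T := by
  have hsT : 0 ≤ Real.sqrt T := Real.sqrt_nonneg _
  have hdivnn : 0 ≤ K T / Real.sqrt T := div_nonneg hK.le hsT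
  have hA : |w * ψt (K T * m) * K T / Real.sqrt T| ≤ M ^ 2 * bΨ * (K T / Real.sqrt T) := by
    have e1 : w * ψt (K T * m) * K T / Real.sqrt T
        = ψt (K T * m) * (w * (K T / Real.sqrt T)) := by ring
    rw [e1, abs_mul, abs_of_nonneg (mul_nonneg hw0 hdivnn)]
    calc |ψt (K T * m)| * (w * (K T / Real.sqrt T))
        ≤ bΨ * (M ^ 2 * (K T / Real.sqrt T)) :=
          mul_le_mul (hbψt _) (mul_le_mul_of_nonneg_right hwM hdivnn)
            (mul_nonneg hw0 hdivnn) hbΨ0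
      _ = M ^ 2 * bΨ * (K T / Real.sqrt T) := by ring
  have hterm : ∀ i : Fin n,
      Real.sqrt w * |(ΨL i - ΨR i) * normalPDF (a i * Real.sqrt T / (Real.sqrt w * K T))|
        ≤ M * |ΨL i - ΨR i| *
          (Real.exp (-(a i ^ 2 / (2 * M ^ 2)) * (Real.sqrt T / K T) ^ 2) /
            Real.sqrt (2 * Real.pi)) := by
    intro i
    rcases eq_or_lt_of_le hw0 with hw | hw
    · rw [← hw, Real.sqrt_zero, zero_mul]
      have : (0:ℝ) < Real.sqrt (2 * Real.pi) := Real.sqrt_pos.mpr (by positivity)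
      positivity
    · have hswM : Real.sqrt w ≤ M := by
        rw [show M = Real.sqrt (M ^ 2) from (Real.sqrt_sq hM.le).symm]
        exact Real.sqrt_le_sqrt hwM
      rw [abs_mul, abs_of_nonneg (normalPDF_nonneg _)]
      have hφ : normalPDF (a i * Real.sqrt T / (Real.sqrt w * K T))
          ≤ Real.exp (-(a i ^ 2 / (2 * M ^ 2)) * (Real.sqrt T / K T) ^ 2) /
            Real.sqrt (2 * Real.pi) := by
        unfold normalPDF
        gcongr
        have harg : (a i * Real.sqrt T / (Real.sqrt w * K T)) ^ 2
            = a i ^ 2 * Real.sqrt T ^ 2 / (w * K T ^ 2) := by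
          rw [div_pow, mul_pow, mul_pow, Real.sq_sqrt hw.le]
        rw [harg, neg_mul, neg_div, neg_le_neg_iff]
        have e2 : a i ^ 2 / (2 * M ^ 2) * (Real.sqrt T / K T) ^ 2
            = a i ^ 2 * Real.sqrt T ^ 2 / (2 * M ^ 2 * K T ^ 2) := by
          rw [div_pow]; ring
        have e3 : a i ^ 2 * Real.sqrt T ^ 2 / (w * K T ^ 2) / 2
            = a i ^ 2 * Real.sqrt T ^ 2 / (2 * w * K T ^ 2) := by
          ring
        rw [e2, e3]
        gcongr
      calc Real.sqrt w * (|ΨL i - ΨR i| * normalPDF (a i * Real.sqrt T / (Real.sqrt w * K T)))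
          ≤ M * (|ΨL i - ΨR i| *
            (Real.exp (-(a i ^ 2 / (2 * M ^ 2)) * (Real.sqrt T / K T) ^ 2) /
              Real.sqrt (2 * Real.pi))) :=
            mul_le_mul hswM (mul_le_mul_of_nonneg_left hφ (abs_nonneg _))
              (mul_nonneg (abs_nonneg _) (normalPDF_nonneg _)) hM.le
        _ = _ := by ring
  have hB : |Real.sqrt w * ∑ i, (ΨL i - ΨR i) *
        normalPDF (a i * Real.sqrt T / (Real.sqrt w * K T))|
      ≤ ∑ i, M * |ΨL i - ΨR i| *
        (Real.exp (-(a i ^ 2 / (2 * M ^ 2)) * (Real.sqrt T / K T) ^ 2) /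
          Real.sqrt (2 * Real.pi)) := by
    rw [abs_mul, abs_of_nonneg (Real.sqrt_nonneg w)]
    calc Real.sqrt w * |∑ i, (ΨL i - ΨR i) *
          normalPDF (a i * Real.sqrt T / (Real.sqrt w * K T))|
        ≤ Real.sqrt w * ∑ i, |(ΨL i - ΨR i) *
            normalPDF (a i * Real.sqrt T / (Real.sqrt w * K T))| :=
          mul_le_mul_of_nonneg_left (Finset.abs_sum_le_sum_abs _ _) (Real.sqrt_nonneg w)
      _ = ∑ i, Real.sqrt w * |(ΨL i - ΨR i) *
            normalPDF (a i * Real.sqrt T / (Real.sqrt w * K T))| := Finset.mul_sum _ _ _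
      _ ≤ _ := Finset.sum_le_sum fun i _ => hterm i
  calc |Lambda K ψt a ΨL ΨR T m w| ≤ _ + _ := abs_sub _ _
    _ ≤ Dbound K a ΨL ΨR bΨ M T := add_le_add hA hB

lemma Dbound_tendsto (K : ℕ → ℝ) {n : ℕ} (a ΨL ΨR : Fin n → ℝ) (bΨ M : ℝ)
    (hM : 0 < M) (hane : ∀ i, a i ≠ 0) (hKpos : ∀ T, 0 < K T)
    (hKo : Tendsto (fun T : ℕ => K T / Real.sqrt T) atTop (nhds 0)) :
    Tendsto (Dbound K a ΨL ΨR bΨ M) atTop (nhds 0) := by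
  have hratio : Tendsto (fun T : ℕ => Real.sqrt T / K T) atTop atTop := by
    have h0 : Tendsto (fun T : ℕ => K T / Real.sqrt T) atTop (nhdsWithin 0 (Set.Ioi 0)) := by
      refine tendsto_nhdsWithin_of_tendsto_nhds_of_eventually_within _ hKo ?_
      filter_upwards [eventually_ge_atTop 1] with T hT
      have : (0:ℝ) < T := by exact_mod_cast Nat.lt_of_lt_of_le Nat.zero_lt_one hT
      exact div_pos (hKpos T) (Real.sqrt_pos.mpr this)
    have := h0.inv_tendsto_nhdsGT_zero
    simpa [Pi.inv_def, inv_div] using this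
  have h1 : Tendsto (fun T : ℕ => M ^ 2 * bΨ * (K T / Real.sqrt T)) atTop (nhds 0) := by
    simpa using hKo.const_mul (M ^ 2 * bΨ)
  have h2 : Tendsto (fun T : ℕ => ∑ i : Fin n, M * |ΨL i - ΨR i| *
      (Real.exp (-(a i ^ 2 / (2 * M ^ 2)) * (Real.sqrt T / K T) ^ 2) /
        Real.sqrt (2 * Real.pi))) atTop (nhds 0) := by
    have : Tendsto (fun T : ℕ => ∑ i : Fin n, M * |ΨL i - ΨR i| *
        (Real.exp (-(a i ^ 2 / (2 * M ^ 2)) * (Real.sqrt T / K T) ^ 2) /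
          Real.sqrt (2 * Real.pi))) atTop (nhds (∑ i : Fin n, (0:ℝ))) := by
      refine tendsto_finset_sum _ fun i _ => ?_
      have hc : 0 < a i ^ 2 / (2 * M ^ 2) := by
        have := hane i
        positivity
      have hsq : Tendsto (fun T : ℕ => (Real.sqrt T / K T) ^ 2) atTop atTop :=
        (tendsto_pow_atTop two_ne_zero).comp hratio
      have hmul : Tendsto (fun T : ℕ => a i ^ 2 / (2 * M ^ 2) * (Real.sqrt T / K T) ^ 2)
          atTop atTop := hsq.const_mul_atTop hc
      have hneg : Tendsto (fun T : ℕ => -(a i ^ 2 / (2 * M ^ 2)) * (Real.sqrt T / K T) ^ 2)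
          atTop atBot := by
        simpa [Function.comp_def, neg_mul] using tendsto_neg_atTop_atBot.comp hmul
      have hexp : Tendsto (fun T : ℕ =>
          Real.exp (-(a i ^ 2 / (2 * M ^ 2)) * (Real.sqrt T / K T) ^ 2)) atTop (nhds 0) :=
        Real.tendsto_exp_atBot.comp hneg
      simpa using (hexp.div_const (Real.sqrt (2 * Real.pi))).const_mul (M * |ΨL i - ΨR i|)
    simpa using this
  have h12 := h1.add h2
  rw [add_zero] at h12
  exact h12

/-- Lemma 3: the adjustment term `Λ_T(θ̂_T·μ̂_T, θ̂_T²·v̂_T)` tends to `0` in probability. -/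
theorem adjustment_term_tendsto_zero
    {Ω : Type*} [MeasurableSpace Ω] (P : Measure Ω) [IsProbabilityMeasure P]
    -- the piecewise-smooth indicator setup
    (Ψ ψ ψt : ℝ → ℝ) {n : ℕ} (a ΨL ΨR : Fin n → ℝ) (bΨ : ℝ)
    (hΨanti : Antitone Ψ) (hΨ01 : ∀ x : ℝ, 0 ≤ Ψ x ∧ Ψ x ≤ 1)
    (ha : StrictMono a) (hane : ∀ i, a i ≠ 0)
    (hderiv : ∀ x ∉ Set.range a, HasDerivAt Ψ (ψ x) x)
    (hψcont : ContinuousOn ψ (Set.range a)ᶜ)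
    (hψbd : ∀ x ∉ Set.range a, |ψ x| ≤ bΨ)
    (hψt : ∀ x : ℝ, Tendsto ψ (nhdsWithin x (Set.Iio x)) (nhds (ψt x)))
    (hΨL : ∀ i, Tendsto Ψ (nhdsWithin (a i) (Set.Iio (a i))) (nhds (ΨL i)))
    (hΨR : ∀ i, Tendsto Ψ (nhdsWithin (a i) (Set.Ioi (a i))) (nhds (ΨR i)))
    -- the tuning sequence
    (K : ℕ → ℝ) (hKpos : ∀ T, 0 < K T)
    (hKo : Tendsto (fun T : ℕ => K T / Real.sqrt T) atTop (nhds 0))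
    -- the random variables
    (vhat θhat μhat : ℕ → Ω → ℝ) (v θ : ℝ) (hv : 0 ≤ v) (hθ : 0 < θ)
    (hvhatpos : ∀ T, ∀ᵐ ω ∂P, 0 ≤ vhat T ω)
    (hθhatpos : ∀ T, ∀ᵐ ω ∂P, 0 < θhat T ω)
    (hvhat : TendstoInProb P vhat v) (hθhat : TendstoInProb P θhat θ) :
    TendstoInProb P
      (fun T ω => Lambda K ψt a ΨL ΨR T (θhat T ω * μhat T ω)
        ((θhat T ω) ^ 2 * vhat T ω)) 0 := by
  have hbψt := psit_bound ψ ψt a bΨ hψbd hψt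
  have hbΨ0 : 0 ≤ bΨ := le_trans (abs_nonneg _) (hbψt 0)
  set M : ℝ := (θ + 1) * Real.sqrt (v + 1) with hMdef
  have hMpos : 0 < M := mul_pos (by linarith) (Real.sqrt_pos.mpr (by linarith))
  have hMsq : M ^ 2 = (θ + 1) ^ 2 * (v + 1) := by
    rw [hMdef, mul_pow, Real.sq_sqrt (by linarith)]
  have hD := Dbound_tendsto K a ΨL ΨR bΨ M hMpos hane hKpos hKo
  intro ε hε
  have hev : ∀ᶠ T in atTop,
      P {ω | ε < |Lambda K ψt a ΨL ΨR T (θhat T ω * μhat T ω)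
        ((θhat T ω) ^ 2 * vhat T ω) - 0|}
      ≤ P {ω | 1 < |vhat T ω - v|} + P {ω | 1 < |θhat T ω - θ|} := by
    filter_upwards [hD.eventually_lt_const hε] with T hDT
    have hincl : {ω | ε < |Lambda K ψt a ΨL ΨR T (θhat T ω * μhat T ω)
          ((θhat T ω) ^ 2 * vhat T ω) - 0|}
        ⊆ {ω | 1 < |vhat T ω - v|} ∪ {ω | 1 < |θhat T ω - θ|}
          ∪ {ω | ¬ 0 ≤ vhat T ω} ∪ {ω | ¬ 0 < θhat T ω} := by
      intro ω hω
      simp only [Set.mem_setOf_eq, sub_zero] at hω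
      simp only [Set.mem_union, Set.mem_setOf_eq]
      by_contra hcon
      push_neg at hcon
      obtain ⟨⟨⟨h1, h2⟩, h3⟩, h4⟩ := hcon
      have hvle : vhat T ω ≤ v + 1 := by
        have := abs_le.mp h1
        linarith [this.2]
      have hθle : θhat T ω ≤ θ + 1 := by
        have := abs_le.mp h2
        linarith [this.2]
      have hw0 : 0 ≤ (θhat T ω) ^ 2 * vhat T ω := mul_nonneg (sq_nonneg _) h3
      have hwM : (θhat T ω) ^ 2 * vhat T ω ≤ M ^ 2 := by
        rw [hMsq]
        have h5 : (θhat T ω) ^ 2 ≤ (θ + 1) ^ 2 := by nlinarith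
        nlinarith
      have := lambda_abs_le K ψt a ΨL ΨR bΨ M hbψt hbΨ0 hMpos T (hKpos T)
        (θhat T ω * μhat T ω) _ hw0 hwM
      have : |Lambda K ψt a ΨL ΨR T (θhat T ω * μhat T ω)
          ((θhat T ω) ^ 2 * vhat T ω)| < ε := lt_of_le_of_lt this hDT
      exact absurd hω (not_lt.mpr this.le)
    calc P {ω | ε < |Lambda K ψt a ΨL ΨR T (θhat T ω * μhat T ω)
          ((θhat T ω) ^ 2 * vhat T ω) - 0|}
        ≤ P ({ω | 1 < |vhat T ω - v|} ∪ {ω | 1 < |θhat T ω - θ|}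
          ∪ {ω | ¬ 0 ≤ vhat T ω} ∪ {ω | ¬ 0 < θhat T ω}) := measure_mono hincl
      _ ≤ P ({ω | 1 < |vhat T ω - v|} ∪ {ω | 1 < |θhat T ω - θ|}
          ∪ {ω | ¬ 0 ≤ vhat T ω}) + P {ω | ¬ 0 < θhat T ω} := measure_union_le _ _
      _ ≤ (P ({ω | 1 < |vhat T ω - v|} ∪ {ω | 1 < |θhat T ω - θ|})
          + P {ω | ¬ 0 ≤ vhat T ω}) + P {ω | ¬ 0 < θhat T ω} :=
            add_le_add_left (measure_union_le _ _) _
      _ ≤ ((P {ω | 1 < |vhat T ω - v|} + P {ω | 1 < |θhat T ω - θ|})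
          + P {ω | ¬ 0 ≤ vhat T ω}) + P {ω | ¬ 0 < θhat T ω} :=
            add_le_add_left (add_le_add_left (measure_union_le _ _) _) _
      _ = P {ω | 1 < |vhat T ω - v|} + P {ω | 1 < |θhat T ω - θ|} := by
            rw [ae_iff.mp (hvhatpos T), ae_iff.mp (hθhatpos T), add_zero, add_zero]
  have hupper : Tendsto (fun T => P {ω | 1 < |vhat T ω - v|}
      + P {ω | 1 < |θhat T ω - θ|}) atTop (nhds 0) := by
    simpa using (hvhat 1 one_pos).add (hθhat 1 one_pos)
  exact tendsto_of_tendsto_of_tendsto_of_le_of_le' tendsto_const_nhds hupper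
    (Filter.Eventually.of_forall fun T => bot_le) hev

end
end

section
/- Let Ψ, ψ̃, a₁ < … < aₙ, b_Ψ and Λ_T be as in the piecewise-smooth indicator setup, and let K : ℕ → ℝ be positive. Then for every T ∈ ℕ with T ≥ 1, every m ∈ ℝ and every v > 0: |Λ_T(m, v)| ≤ v·(K(T)/√T)·( b_Ψ + √(2v/π)·(K(T)/√T)·Σᵢ₌₁ⁿ aᵢ⁻² ). -/
open MeasureTheory Filter Topology ProbabilityTheory Matrix

noncomputable section

/-- The deterministic bound on the adjustment term:
`|Λ_T(m, v)| ≤ v·(K(T)/√T)·(b_Ψ + √(2v/π)·(K(T)/√T)·Σᵢ aᵢ⁻²)`. -/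
theorem adjustment_term_bound
    -- the piecewise-smooth indicator setup
    (Ψ ψ ψt : ℝ → ℝ) {n : ℕ} (a ΨL ΨR : Fin n → ℝ) (bΨ : ℝ)
    (hΨanti : Antitone Ψ) (hΨ01 : ∀ x : ℝ, 0 ≤ Ψ x ∧ Ψ x ≤ 1)
    (ha : StrictMono a) (hane : ∀ i, a i ≠ 0)
    (hderiv : ∀ x ∉ Set.range a, HasDerivAt Ψ (ψ x) x)
    (hψcont : ContinuousOn ψ (Set.range a)ᶜ)
    (hψbd : ∀ x ∉ Set.range a, |ψ x| ≤ bΨ)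
    (hψt : ∀ x : ℝ, Tendsto ψ (nhdsWithin x (Set.Iio x)) (nhds (ψt x)))
    (hΨL : ∀ i, Tendsto Ψ (nhdsWithin (a i) (Set.Iio (a i))) (nhds (ΨL i)))
    (hΨR : ∀ i, Tendsto Ψ (nhdsWithin (a i) (Set.Ioi (a i))) (nhds (ΨR i)))
    -- the tuning sequence
    (K : ℕ → ℝ) (hKpos : ∀ T, 0 < K T) :
    ∀ T : ℕ, 1 ≤ T → ∀ m v : ℝ, 0 < v →
      |Lambda K ψt a ΨL ΨR T m v| ≤
        v * (K T / Real.sqrt T) *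
          (bΨ + Real.sqrt (2 * v / Real.pi) * (K T / Real.sqrt T) *
            ∑ i, ((a i) ^ 2)⁻¹) := by
  intro T hT m v hv
  have hTpos : (0:ℝ) < T := by exact_mod_cast Nat.lt_of_lt_of_le Nat.zero_lt_one hT
  have hK : 0 < K T := hKpos T
  set s := Real.sqrt (T : ℝ) with hs_def
  have hs : 0 < s := Real.sqrt_pos.2 hTpos
  have hs2 : s ^ 2 = (T : ℝ) := Real.sq_sqrt hTpos.le
  set w := Real.sqrt v with hw_def
  have hw : 0 < w := Real.sqrt_pos.2 hv
  have hw2 : w ^ 2 = v := Real.sq_sqrt hv.le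
  -- bound on ψt
  have hψtbd : ∀ x : ℝ, |ψt x| ≤ bΨ := by
    intro x
    have hfin : (Set.range a \ {x}).Finite := (Set.finite_range a).subset Set.diff_subset
    have hopen : IsOpen (Set.range a \ {x})ᶜ := hfin.isClosed.isOpen_compl
    have hxmem : x ∈ (Set.range a \ {x})ᶜ := by simp
    have h1 : ∀ᶠ y in 𝓝[<] x, y ∈ (Set.range a \ {x})ᶜ :=
      (hopen.eventually_mem hxmem).filter_mono nhdsWithin_le_nhds
    have h2 : ∀ᶠ y in 𝓝[<] x, y ∈ Set.Iio x := eventually_mem_nhdsWithin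
    have hev : ∀ᶠ y in 𝓝[<] x, |ψ y| ≤ bΨ := by
      filter_upwards [h1, h2] with y hy1 hy2
      refine hψbd y fun hy => hy1 ⟨hy, ?_⟩
      exact ne_of_lt hy2
    exact le_of_tendsto ((hψt x).abs) hev
  -- bounds on ΨL, ΨR
  have hΨL1 : ∀ i, ΨL i ≤ 1 := fun i =>
    le_of_tendsto (hΨL i) (Eventually.of_forall fun y => (hΨ01 y).2)
  have hΨL0 : ∀ i, 0 ≤ ΨL i := fun i =>
    ge_of_tendsto (hΨL i) (Eventually.of_forall fun y => (hΨ01 y).1)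
  have hΨR1 : ∀ i, ΨR i ≤ 1 := fun i =>
    le_of_tendsto (hΨR i) (Eventually.of_forall fun y => (hΨ01 y).2)
  have hΨR0 : ∀ i, 0 ≤ ΨR i := fun i =>
    ge_of_tendsto (hΨR i) (Eventually.of_forall fun y => (hΨ01 y).1)
  have hjump : ∀ i, |ΨL i - ΨR i| ≤ 1 := by
    intro i; rw [abs_le]; constructor <;> [linarith [hΨL0 i, hΨR1 i]; linarith [hΨL1 i, hΨR0 i]]
  have hπ : 0 < Real.pi := Real.pi_pos
  have hsqrt2π : 0 < Real.sqrt (2 * Real.pi) := Real.sqrt_pos.2 (by positivity)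
  have hpdf_nonneg : ∀ x : ℝ, 0 ≤ normalPDF x := fun x => by
    unfold normalPDF; positivity
  -- the square-root identity : √(2v/π) = 2w/√(2π)
  have hsv : Real.sqrt (2 * v / Real.pi) = 2 * w / Real.sqrt (2 * Real.pi) := by
    have hsq : (2 * w / Real.sqrt (2 * Real.pi)) ^ 2 = 2 * v / Real.pi := by
      rw [div_pow, Real.sq_sqrt (by positivity : (0:ℝ) ≤ 2 * Real.pi)]
      rw [mul_pow, hw2]; field_simp
    rw [← hsq, Real.sqrt_sq (by positivity)]
  -- per-term bound
  have hterm : ∀ i : Fin n,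
      w * normalPDF (a i * s / (w * K T)) ≤
        v * (K T / s) * (Real.sqrt (2 * v / Real.pi) * (K T / s)) * ((a i) ^ 2)⁻¹ := by
    intro i
    have hai := hane i
    set x := a i * s / (w * K T) with hx_def
    have hxne : x ≠ 0 :=
      div_ne_zero (mul_ne_zero hai (ne_of_gt hs)) (ne_of_gt (mul_pos hw hK))
    have hx2 : 0 < x ^ 2 := by positivity
    have hexp : Real.exp (-(x ^ 2) / 2) ≤ 2 / x ^ 2 := by
      rw [show -(x ^ 2) / 2 = -(x ^ 2 / 2) by ring, Real.exp_neg]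
      have h1 : x ^ 2 / 2 ≤ Real.exp (x ^ 2 / 2) := by
        have := Real.add_one_le_exp (x ^ 2 / 2); linarith
      rw [inv_le_iff_one_le_mul₀ (Real.exp_pos _)]
      calc (1:ℝ) = (2 / x ^ 2) * (x ^ 2 / 2) := by field_simp
        _ ≤ 2 / x ^ 2 * Real.exp (x ^ 2 / 2) := by
            apply mul_le_mul_of_nonneg_left h1 (by positivity)
    have hpdf : normalPDF x ≤ 2 / x ^ 2 / Real.sqrt (2 * Real.pi) := by
      unfold normalPDF
      gcongr
    have hx2val : x ^ 2 = (a i) ^ 2 * s ^ 2 / (w ^ 2 * (K T) ^ 2) := by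
      rw [hx_def, div_pow, mul_pow, mul_pow]
    have key : w * (2 / x ^ 2 / Real.sqrt (2 * Real.pi)) =
        v * (K T / s) * (Real.sqrt (2 * v / Real.pi) * (K T / s)) * ((a i) ^ 2)⁻¹ := by
      rw [hsv, hx2val, ← hw2]
      field_simp
    calc w * normalPDF x ≤ w * (2 / x ^ 2 / Real.sqrt (2 * Real.pi)) := by
          apply mul_le_mul_of_nonneg_left hpdf hw.le
      _ = _ := key
  -- assemble
  have hΛ : Lambda K ψt a ΨL ΨR T m v = v * ψt (K T * m) * K T / s -
      w * ∑ i, (ΨL i - ΨR i) * normalPDF (a i * s / (w * K T)) := rfl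
  have h1 : |v * ψt (K T * m) * K T / s| ≤ v * (K T / s) * bΨ := by
    rw [abs_div, abs_of_pos hs, abs_mul, abs_mul, abs_of_pos hv, abs_of_pos hK]
    calc v * |ψt (K T * m)| * K T / s ≤ v * bΨ * K T / s := by
          gcongr
          exact hψtbd _
      _ = v * (K T / s) * bΨ := by ring
  have h2 : |w * ∑ i, (ΨL i - ΨR i) * normalPDF (a i * s / (w * K T))| ≤
      ∑ i, v * (K T / s) * (Real.sqrt (2 * v / Real.pi) * (K T / s)) * ((a i) ^ 2)⁻¹ := by
    calc |w * ∑ i, (ΨL i - ΨR i) * normalPDF (a i * s / (w * K T))|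
        = w * |∑ i, (ΨL i - ΨR i) * normalPDF (a i * s / (w * K T))| := by
          rw [abs_mul, abs_of_pos hw]
      _ ≤ w * ∑ i, |(ΨL i - ΨR i) * normalPDF (a i * s / (w * K T))| := by
          apply mul_le_mul_of_nonneg_left (Finset.abs_sum_le_sum_abs _ _) hw.le
      _ ≤ w * ∑ i, normalPDF (a i * s / (w * K T)) := by
          apply mul_le_mul_of_nonneg_left _ hw.le
          apply Finset.sum_le_sum
          intro i _
          rw [abs_mul, abs_of_nonneg (hpdf_nonneg _)]
          calc |ΨL i - ΨR i| * normalPDF (a i * s / (w * K T))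
              ≤ 1 * normalPDF (a i * s / (w * K T)) :=
                mul_le_mul_of_nonneg_right (hjump i) (hpdf_nonneg _)
            _ = _ := one_mul _
      _ = ∑ i, w * normalPDF (a i * s / (w * K T)) := Finset.mul_sum _ _ _
      _ ≤ _ := Finset.sum_le_sum fun i _ => hterm i
  calc |Lambda K ψt a ΨL ΨR T m v|
      ≤ |v * ψt (K T * m) * K T / s| +
        |w * ∑ i, (ΨL i - ΨR i) * normalPDF (a i * s / (w * K T))| := by
        rw [hΛ]; exact abs_sub _ _
    _ ≤ v * (K T / s) * bΨ +
        ∑ i, v * (K T / s) * (Real.sqrt (2 * v / Real.pi) * (K T / s)) * ((a i) ^ 2)⁻¹ :=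
        add_le_add h1 h2
    _ = v * (K T / s) * (bΨ + Real.sqrt (2 * v / Real.pi) * (K T / s) * ∑ i, ((a i) ^ 2)⁻¹) := by
        rw [← Finset.mul_sum]; ring

end
end

section
/- Let c > 0 and h > 0. Let Ψ : ℝ → ℝ be bounded and non-increasing, and suppose there are finitely many points a₁ < … < aₙ such that Ψ is continuously differentiable on ℝ ∖ {a₁,…,aₙ} with derivative ψ bounded in absolute value, the left-hand limit ψ̃(x) := lim_{y→x⁻} ψ(y) exists at every x ∈ ℝ, and the one-sided limits Ψ(aᵢ⁻), Ψ(aᵢ⁺) exist for each i. If X has distribution gaussianReal 0 c, then E[Ψ(h·X)·X] = c·h·E[ψ̃(h·X)] − √c·Σᵢ₌₁ⁿ (Ψ(aᵢ⁻) − Ψ(aᵢ⁺))·φ(aᵢ/(h·√c)), where φ(x) = exp(−x²/2)/√(2π) is the standard normal density. (Appendix A identity used to construct the adjustment term Λ_T.) -/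
open MeasureTheory Filter Topology ProbabilityTheory Matrix

noncomputable section

/-- FTC on an interval with a finite exceptional set. -/
lemma ftc_finset (s : Finset ℝ) :
    ∀ {F G : ℝ → ℝ} {A B : ℝ}, A ≤ B → ContinuousOn F (Set.Icc A B) →
    (∀ x ∈ Set.Ioo A B, x ∉ s → HasDerivAt F (G x) x) →
    IntervalIntegrable G MeasureTheory.volume A B →
    ∫ y in A..B, G y = F B - F A := by
  classical
  induction s using Finset.induction_on with
  | empty =>
    intro F G A B hAB hcont hder hint
    exact intervalIntegral.integral_eq_sub_of_hasDerivAt_of_le hAB hcont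
      (fun x hx => hder x hx (by simp)) hint
  | @insert p s hp IH =>
    intro F G A B hAB hcont hder hint
    by_cases hpm : p ∈ Set.Ioo A B
    · have hAp : A ≤ p := hpm.1.le
      have hpB : p ≤ B := hpm.2.le
      have hsub1 : Set.uIcc A p ⊆ Set.uIcc A B := by
        rw [Set.uIcc_of_le hAp, Set.uIcc_of_le hAB]
        exact Set.Icc_subset_Icc le_rfl hpB
      have hsub2 : Set.uIcc p B ⊆ Set.uIcc A B := by
        rw [Set.uIcc_of_le hpB, Set.uIcc_of_le hAB]
        exact Set.Icc_subset_Icc hAp le_rfl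
      have h1 : ∫ y in A..p, G y = F p - F A := by
        refine IH hAp (hcont.mono (Set.Icc_subset_Icc le_rfl hpB)) (fun x hx hxs => ?_)
          (hint.mono_set hsub1)
        refine hder x ⟨hx.1, hx.2.trans hpm.2⟩ ?_
        simp only [Finset.mem_insert, not_or]
        exact ⟨hx.2.ne, hxs⟩
      have h2 : ∫ y in p..B, G y = F B - F p := by
        refine IH hpB (hcont.mono (Set.Icc_subset_Icc hAp le_rfl)) (fun x hx hxs => ?_)
          (hint.mono_set hsub2)
        refine hder x ⟨hpm.1.trans hx.1, hx.2⟩ ?_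
        simp only [Finset.mem_insert, not_or]
        exact ⟨hx.1.ne', hxs⟩
      have := intervalIntegral.integral_add_adjacent_intervals
        (hint.mono_set hsub1) (hint.mono_set hsub2)
      rw [← this, h1, h2]; ring
    · refine IH hAB hcont (fun x hx hxs => hder x hx ?_) hint
      simp only [Finset.mem_insert, not_or]
      exact ⟨fun hxp => hpm (hxp ▸ hx), hxs⟩

/-- FTC on the whole line with a finite exceptional set, with limits at infinity. -/
lemma ftc_line (s : Finset ℝ) (F G : ℝ → ℝ) (hcont : Continuous F)
    (hder : ∀ x ∉ s, HasDerivAt F (G x) x) (hint : Integrable G)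
    {LB LT : ℝ} (hbot : Tendsto F atBot (𝓝 LB)) (htop : Tendsto F atTop (𝓝 LT)) :
    ∫ y, G y = LT - LB := by
  have hN : Tendsto (fun n : ℕ => -(n : ℝ)) atTop atBot :=
    tendsto_neg_atBot_iff.mpr tendsto_natCast_atTop_atTop
  have hP : Tendsto (fun n : ℕ => (n : ℝ)) atTop atTop := tendsto_natCast_atTop_atTop
  have h1 : Tendsto (fun n : ℕ => ∫ y in (-(n:ℝ))..(n:ℝ), G y) atTop (𝓝 (∫ y, G y)) :=
    intervalIntegral_tendsto_integral hint hN hP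
  have h2 : ∀ n : ℕ, ∫ y in (-(n:ℝ))..(n:ℝ), G y = F n - F (-(n:ℝ)) := by
    intro n
    refine ftc_finset s (by simp) hcont.continuousOn
      (fun x _ hxs => hder x hxs) hint.intervalIntegrable
  have h3 : Tendsto (fun n : ℕ => F n - F (-(n:ℝ))) atTop (𝓝 (LT - LB)) :=
    (htop.comp hP).sub (hbot.comp hN)
  exact tendsto_nhds_unique (h1.congr fun n => (h2 n)) h3

/-- Appendix A identity: if `X ~ N(0, c)` then
`E[Ψ(h·X)·X] = c·h·E[ψ̃(h·X)] − √c·Σᵢ (Ψ(aᵢ⁻) − Ψ(aᵢ⁺))·φ(aᵢ/(h·√c))`. -/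
theorem gaussian_smoothed_identity
    {Ω : Type*} [MeasurableSpace Ω] (P : Measure Ω) [IsProbabilityMeasure P]
    (c : NNReal) (hc : 0 < c) (h : ℝ) (hh : 0 < h)
    (X : Ω → ℝ) (hX : Measurable X)
    (hlaw : Measure.map X P = gaussianReal 0 c)
    -- the piecewise-smooth setup: `Ψ` bounded and non-increasing
    (Ψ ψ ψt : ℝ → ℝ) {n : ℕ} (a ΨL ΨR : Fin n → ℝ) (bΨ CΨ : ℝ)
    (hΨanti : Antitone Ψ) (hΨbd : ∀ x : ℝ, |Ψ x| ≤ CΨ)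
    (ha : StrictMono a)
    (hderiv : ∀ x ∉ Set.range a, HasDerivAt Ψ (ψ x) x)
    (hψcont : ContinuousOn ψ (Set.range a)ᶜ)
    (hψbd : ∀ x ∉ Set.range a, |ψ x| ≤ bΨ)
    (hψt : ∀ x : ℝ, Tendsto ψ (nhdsWithin x (Set.Iio x)) (nhds (ψt x)))
    (hΨL : ∀ i, Tendsto Ψ (nhdsWithin (a i) (Set.Iio (a i))) (nhds (ΨL i)))
    (hΨR : ∀ i, Tendsto Ψ (nhdsWithin (a i) (Set.Ioi (a i))) (nhds (ΨR i))) :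
    ∫ ω, Ψ (h * X ω) * X ω ∂P =
      (c : ℝ) * h * ∫ ω, ψt (h * X ω) ∂P -
        Real.sqrt c * ∑ i, (ΨL i - ΨR i) * normalPDF (a i / (h * Real.sqrt c)) := by
  classical
  have hc' : (0:ℝ) < (c:ℝ) := hc
  have hh' : h ≠ 0 := hh.ne'
  set p : ℝ → ℝ := gaussianPDFReal 0 c with hp_def
  have hp_nonneg : ∀ x, 0 ≤ p x := gaussianPDFReal_nonneg 0 c
  have hp_meas : Measurable p := measurable_gaussianPDFReal 0 c
  have hp_int : Integrable p := integrable_gaussianPDFReal 0 c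
  have hp_cont : Continuous p := by
    simp only [hp_def, gaussianPDFReal_def]
    exact continuous_const.mul
      ((((continuous_id.sub continuous_const).pow 2).neg.div_const _).rexp)
  -- limits of p at infinity
  have hsq_top : Tendsto (fun x : ℝ => -(x - 0)^2 / (2*(c:ℝ))) atTop atBot := by
    simp only [sub_zero]
    apply Tendsto.atBot_div_const (by positivity)
    apply tendsto_neg_atBot_iff.mpr
    exact tendsto_pow_atTop two_ne_zero
  have hsq_bot : Tendsto (fun x : ℝ => -(x - 0)^2 / (2*(c:ℝ))) atBot atBot := by
    simp only [sub_zero]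
    apply Tendsto.atBot_div_const (by positivity)
    apply tendsto_neg_atBot_iff.mpr
    have := (tendsto_pow_atTop (n := 2) two_ne_zero).comp
      (tendsto_neg_atBot_atTop : Tendsto (fun x : ℝ => -x) atBot atTop)
    simpa [Function.comp_def, neg_pow] using this
  have hp_top : Tendsto p atTop (𝓝 0) := by
    simp only [hp_def, gaussianPDFReal_def]
    have := (Real.tendsto_exp_atBot.comp hsq_top).const_mul ((Real.sqrt (2*Real.pi*(c:ℝ)))⁻¹)
    simpa using this
  have hp_bot : Tendsto p atBot (𝓝 0) := by
    simp only [hp_def, gaussianPDFReal_def]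
    have := (Real.tendsto_exp_atBot.comp hsq_bot).const_mul ((Real.sqrt (2*Real.pi*(c:ℝ)))⁻¹)
    simpa using this
  -- derivative of -(c * p)
  have hq : ∀ x : ℝ, HasDerivAt (fun y => -((c:ℝ) * p y)) (x * p x) x := by
    intro x
    have h0 : HasDerivAt (fun y:ℝ => (y-0)^2) (2*(x-0)) x := by
      simpa using hasDerivAt_pow 2 x
    have hg : HasDerivAt (fun y:ℝ => -(y-0)^2/(2*(c:ℝ))) (-(2*(x-0))/(2*(c:ℝ))) x :=
      h0.neg.div_const _
    have h2 := (hg.exp.const_mul ((Real.sqrt (2*Real.pi*(c:ℝ)))⁻¹)).const_mul (c:ℝ)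
    have h3 := h2.neg
    have h4 : HasDerivAt (fun y => -((c:ℝ) * p y))
        (-((c:ℝ) * ((Real.sqrt (2*Real.pi*(c:ℝ)))⁻¹ *
          (Real.exp (-(x-0)^2/(2*(c:ℝ))) * (-(2*(x-0))/(2*(c:ℝ))))))) x := by
      exact h3
    convert h4 using 1
    simp only [hp_def, gaussianPDFReal_def]
    field_simp
    ring
  -- the main definitions
  set q : ℝ → ℝ := fun x => -((c:ℝ) * p x) with hq_def
  set Ψh : ℝ → ℝ := fun y => if hy : ∃ i, a i = y then ΨL hy.choose else Ψ y with hΨh_def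
  set J : Fin n → ℝ := fun i => (c:ℝ) * p (a i / h) * (ΨL i - ΨR i) with hJ_def
  set S : ℝ → ℝ := fun x => ∑ i, if a i / h < x then J i else 0 with hS_def
  set Fh : ℝ → ℝ := fun x => Ψh (h * x) * q x - S x with hFh_def
  set G : ℝ → ℝ := fun x => Ψ (h * x) * (x * p x) - (c:ℝ) * h * (ψ (h * x) * p x)
    with hG_def
  -- basic facts
  have hΨh_eq : ∀ y, y ∉ Set.range a → Ψh y = Ψ y := by
    intro y hy
    rw [hΨh_def]
    simp only
    rw [dif_neg]
    rintro ⟨i, hi⟩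
    exact hy ⟨i, hi⟩
  have hΨh_jump : ∀ k, Ψh (a k) = ΨL k := by
    intro k
    have hex : ∃ i, a i = a k := ⟨k, rfl⟩
    rw [hΨh_def]
    simp only
    rw [dif_pos hex]
    congr 1
    exact ha.injective hex.choose_spec
  have hCnn : 0 ≤ CΨ := le_trans (abs_nonneg _) (hΨbd 0)
  have hΨL_bd : ∀ i, |ΨL i| ≤ CΨ := by
    intro i
    have habs : Tendsto (fun y => |Ψ y|) (𝓝[<] (a i)) (𝓝 |ΨL i|) := (hΨL i).abs
    exact le_of_tendsto habs (Eventually.of_forall fun y => hΨbd y)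
  have hΨh_bd : ∀ y, |Ψh y| ≤ CΨ := by
    intro y
    rw [hΨh_def]
    simp only
    split
    · exact hΨL_bd _
    · exact hΨbd y
  -- exceptional finite set
  set T : Finset ℝ := Finset.image (fun i => a i / h) Finset.univ with hT_def
  have hT' : ∀ x : ℝ, x ∉ T → h * x ∉ Set.range a := by
    rintro x hx ⟨i, hi⟩
    refine hx (Finset.mem_image.2 ⟨i, Finset.mem_univ i, ?_⟩)
    field_simp [hi]
    exact hi
  -- locality of S away from the jump points
  have hS_loc : ∀ x : ℝ, (∀ i, a i / h ≠ x) → ∀ᶠ y in 𝓝 x, S y = S x := by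
    intro x hx
    have hev : ∀ᶠ y in 𝓝 x, ∀ i : Fin n,
        ((if a i / h < y then J i else 0) = (if a i / h < x then J i else 0)) := by
      rw [eventually_all]
      intro i
      rcases lt_or_gt_of_ne (hx i) with hlt | hgt
      · filter_upwards [Ioi_mem_nhds hlt] with y hy
        rw [if_pos (Set.mem_Ioi.mp hy), if_pos hlt]
      · filter_upwards [Iio_mem_nhds hgt] with y hy
        rw [if_neg (not_lt.2 (Set.mem_Iio.mp hy).le), if_neg (not_lt.2 hgt.le)]
    filter_upwards [hev] with y hy
    exact Finset.sum_congr rfl fun i _ => hy i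
  -- S is eventually equal to S x on the left of any x
  have hS_left : ∀ x : ℝ, ∀ᶠ y in 𝓝[<] x, S y = S x := by
    intro x
    have hev : ∀ᶠ y in 𝓝[<] x, ∀ i : Fin n,
        ((if a i / h < y then J i else 0) = (if a i / h < x then J i else 0)) := by
      rw [eventually_all]
      intro i
      by_cases hi : a i / h < x
      · filter_upwards [Ioo_mem_nhdsLT hi] with y hy
        rw [if_pos hy.1, if_pos hi]  -- hy : y ∈ Set.Ioo _ x
      · filter_upwards [self_mem_nhdsWithin] with y (hy : y < x)
        rw [if_neg (fun hlt => hi (hlt.trans hy)), if_neg hi]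
    filter_upwards [hev] with y hy
    exact Finset.sum_congr rfl fun i _ => hy i
  have hq_cont : Continuous q := (continuous_const.mul hp_cont).neg
  have hmul_cont : Continuous (fun y : ℝ => h * y) := continuous_const.mul continuous_id
  have hav_nhds : ∀ x : ℝ, h * x ∉ Set.range a → ∀ᶠ y in 𝓝 x, h * y ∉ Set.range a := by
    intro x hxa
    have hopen : IsOpen ((Set.range a)ᶜ : Set ℝ) := (Set.finite_range a).isClosed.isOpen_compl
    have hmem := hmul_cont.continuousAt.preimage_mem_nhds (hopen.mem_nhds hxa)
    exact eventually_of_mem hmem fun y hy => hy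
  -- one-sided avoidance at a jump point
  have hav_side : ∀ (x : ℝ) (k : Fin n), a k = h * x → ∀ (l : Filter ℝ), l ≤ 𝓝 x →
      (∀ᶠ y in l, h * y ≠ a k) → ∀ᶠ y in l, h * y ∉ Set.range a := by
    intro x k hk l hl hne
    have hopen : IsOpen ((Set.range a \ {a k})ᶜ : Set ℝ) :=
      ((Set.finite_range a).subset Set.diff_subset).isClosed.isOpen_compl
    have hmem : h * x ∈ ((Set.range a \ {a k})ᶜ : Set ℝ) := by
      intro hd
      exact hd.2 (by rw [← hk]; rfl)
    have h1 : ∀ᶠ y in 𝓝 x, h * y ∈ ((Set.range a \ {a k})ᶜ : Set ℝ) :=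
      eventually_of_mem (hmul_cont.continuousAt.preimage_mem_nhds (hopen.mem_nhds hmem))
        fun y hy => hy
    filter_upwards [h1.filter_mono hl, hne] with y hy1 hy2 hmem2
    exact hy1 ⟨hmem2, hy2⟩
  -- continuity of Fh
  have hFh_cont : Continuous Fh := by
    rw [continuous_iff_continuousAt]
    intro x
    by_cases hxa : h * x ∈ Set.range a
    · obtain ⟨k, hk⟩ := hxa
      have hΨhx : Ψh (h * x) = ΨL k := by rw [← hk, hΨh_jump]
      have hFhx : Fh x = ΨL k * q x - S x := by
        rw [hFh_def]; simp only; rw [hΨhx]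
      have hq_tl : Tendsto q (𝓝[<] x) (𝓝 (q x)) :=
        (hq_cont.tendsto x).mono_left nhdsWithin_le_nhds
      have hq_tr : Tendsto q (𝓝[>] x) (𝓝 (q x)) :=
        (hq_cont.tendsto x).mono_left nhdsWithin_le_nhds
      rw [continuousAt_iff_continuous_left'_right']
      constructor
      · -- left-continuity
        have hne : ∀ᶠ y in 𝓝[<] x, h * y ≠ a k := by
          filter_upwards [self_mem_nhdsWithin] with y (hy : y < x)
          exact ne_of_lt (by rw [hk]; exact mul_lt_mul_of_pos_left hy hh)
        have hav := hav_side x k hk _ nhdsWithin_le_nhds hne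
        have hmap : Tendsto (fun y => h * y) (𝓝[<] x) (𝓝[<] (a k)) := by
          apply tendsto_nhdsWithin_of_tendsto_nhds_of_eventually_within
          · rw [hk]
            exact (hmul_cont.tendsto x).mono_left nhdsWithin_le_nhds
          · filter_upwards [self_mem_nhdsWithin] with y (hy : y < x)
            show h * y < a k
            rw [hk]
            exact mul_lt_mul_of_pos_left hy hh
        have hΨ_t : Tendsto (fun y => Ψh (h * y)) (𝓝[<] x) (𝓝 (ΨL k)) := by
          refine Tendsto.congr' ?_ ((hΨL k).comp hmap)
          filter_upwards [hav] with y hy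
          exact (hΨh_eq _ hy).symm
        have hS_t : Tendsto S (𝓝[<] x) (𝓝 (S x)) := by
          refine Tendsto.congr' ?_ tendsto_const_nhds
          filter_upwards [hS_left x] with y hy using hy.symm
        have htends : Tendsto Fh (𝓝[<] x) (𝓝 (ΨL k * q x - S x)) :=
          (hΨ_t.mul hq_tl).sub hS_t
        show Tendsto Fh (𝓝[<] x) (𝓝 (Fh x))
        rw [hFhx]; exact htends
      · -- right-continuity
        have hxval : a k / h = x := by rw [hk]; exact mul_div_cancel_left₀ x hh'
        have hne : ∀ᶠ y in 𝓝[>] x, h * y ≠ a k := by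
          filter_upwards [self_mem_nhdsWithin] with y (hy : x < y)
          exact ne_of_gt (by rw [hk]; exact mul_lt_mul_of_pos_left hy hh)
        have hav := hav_side x k hk _ nhdsWithin_le_nhds hne
        have hmap : Tendsto (fun y => h * y) (𝓝[>] x) (𝓝[>] (a k)) := by
          apply tendsto_nhdsWithin_of_tendsto_nhds_of_eventually_within
          · rw [hk]
            exact (hmul_cont.tendsto x).mono_left nhdsWithin_le_nhds
          · filter_upwards [self_mem_nhdsWithin] with y (hy : x < y)
            show a k < h * y
            rw [hk]
            exact mul_lt_mul_of_pos_left hy hh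
        have hΨ_t : Tendsto (fun y => Ψh (h * y)) (𝓝[>] x) (𝓝 (ΨR k)) := by
          refine Tendsto.congr' ?_ ((hΨR k).comp hmap)
          filter_upwards [hav] with y hy
          exact (hΨh_eq _ hy).symm
        have hS_right : ∀ᶠ y in 𝓝[>] x, S y = S x + J k := by
          have hev : ∀ᶠ y in 𝓝[>] x, ∀ i : Fin n,
              ((if a i / h < y then J i else 0)
                = (if a i / h < x then J i else 0) + (if i = k then J i else 0)) := by
            rw [eventually_all]
            intro i
            by_cases hik : i = k
            · subst hik
              filter_upwards [self_mem_nhdsWithin] with y (hy : x < y)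
              rw [if_pos (by rw [hxval]; exact hy), if_neg (by rw [hxval]; exact lt_irrefl x),
                if_pos rfl, zero_add]
            · have hne' : a i / h ≠ x := by
                intro hax
                have h1 : a i = x * h := (div_eq_iff hh').mp hax
                rw [mul_comm, ← hk] at h1
                exact hik (ha.injective h1)
              rcases lt_or_gt_of_ne hne' with hlt | hgt
              · filter_upwards [self_mem_nhdsWithin] with y (hy : x < y)
                rw [if_pos (hlt.trans hy), if_pos hlt, if_neg hik, add_zero]
              · filter_upwards [Ioo_mem_nhdsGT hgt] with y hy
                rw [if_neg (not_lt.2 hy.2.le), if_neg (not_lt.2 hgt.le), if_neg hik, add_zero]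
          filter_upwards [hev] with y hy
          rw [hS_def]
          simp only
          rw [Finset.sum_congr rfl fun i _ => hy i, Finset.sum_add_distrib]
          congr 1
          simp
        have hS_t : Tendsto S (𝓝[>] x) (𝓝 (S x + J k)) := by
          refine Tendsto.congr' ?_ tendsto_const_nhds
          filter_upwards [hS_right] with y hy using hy.symm
        have htends : Tendsto Fh (𝓝[>] x) (𝓝 (ΨR k * q x - (S x + J k))) :=
          (hΨ_t.mul hq_tr).sub hS_t
        show Tendsto Fh (𝓝[>] x) (𝓝 (Fh x))
        rw [hFhx]
        have hval : ΨR k * q x - (S x + J k) = ΨL k * q x - S x := by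
          have : J k = (c:ℝ) * p (a k / h) * (ΨL k - ΨR k) := rfl
          rw [this, hxval]
          rw [hq_def]
          simp only
          ring
        rw [← hval]
        exact htends
    · -- continuity away from the jumps
      have hS_ev := hS_loc x (fun i hi => hxa ⟨i, by rw [← hi]; field_simp⟩)
      have hav := hav_nhds x hxa
      have hcontΨ : ContinuousAt (fun y => Ψ (h * y)) x :=
        ((hderiv _ hxa).continuousAt).comp hmul_cont.continuousAt
      have hc1 : ContinuousAt (fun y => Ψ (h * y) * q y - S x) x :=
        (hcontΨ.mul hq_cont.continuousAt).sub continuousAt_const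
      refine hc1.congr ?_
      filter_upwards [hav, hS_ev] with y hy1 hy2
      rw [hFh_def]
      simp only
      rw [hΨh_eq _ hy1, hy2]
  -- derivative of Fh away from T
  have hFh_der : ∀ x ∉ T, HasDerivAt Fh (G x) x := by
    intro x hxT
    have hxa : h * x ∉ Set.range a := hT' x hxT
    have hmul : HasDerivAt (fun y : ℝ => h * y) h x := by
      simpa using (hasDerivAt_id x).const_mul h
    have h1 : HasDerivAt (fun y => Ψ (h * y)) (ψ (h * x) * h) x :=
      (hderiv _ hxa).comp x hmul
    have h2 := (h1.mul (hq x)).sub_const (S x)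
    have hev : Fh =ᶠ[𝓝 x] fun y => Ψ (h * y) * q y - S x := by
      have hS_ev := hS_loc x (fun i hi => hxa ⟨i, by rw [← hi]; field_simp⟩)
      filter_upwards [hav_nhds x hxa, hS_ev] with y hy1 hy2
      rw [hFh_def]
      simp only
      rw [hΨh_eq _ hy1, hy2]
    have h3 := h2.congr_of_eventuallyEq hev
    refine h3.congr_deriv ?_
    rw [hG_def, hq_def]
    simp only
    ring
  -- integrability
  have hxp_int : Integrable (fun x => x * p x) := by
    have hb : (0:ℝ) < (2*(c:ℝ))⁻¹ := by positivity
    have hI := (integrable_mul_exp_neg_mul_sq hb).const_mul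
      ((Real.sqrt (2*Real.pi*(c:ℝ)))⁻¹)
    refine hI.congr (Eventually.of_forall fun x => ?_)
    simp only [hp_def, gaussianPDFReal_def, sub_zero]
    rw [show -(2*(c:ℝ))⁻¹ * x^2 = -x^2/(2*(c:ℝ)) by ring]
    ring
  have hG1_int : Integrable (fun x => Ψ (h * x) * (x * p x)) := by
    have hmeas : AEStronglyMeasurable (fun x => Ψ (h * x) * (x * p x))
        (volume : Measure ℝ) :=
      ((hΨanti.measurable.comp (measurable_const_mul h)).mul
        (measurable_id.mul hp_meas)).aestronglyMeasurable
    refine Integrable.mono' (hxp_int.abs.const_mul CΨ) hmeas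
      (Eventually.of_forall fun x => ?_)
    rw [Real.norm_eq_abs, abs_mul]
    exact mul_le_mul_of_nonneg_right (hΨbd _) (abs_nonneg _)
  have hnull : (volume : Measure ℝ) {x : ℝ | h * x ∈ Set.range a} = 0 := by
    refine measure_mono_null ?_
      ((Set.finite_range fun i => a i / h).countable.measure_zero _)
    rintro x ⟨i, hi⟩
    exact ⟨i, by field_simp [hi]; exact hi⟩
  have hψae : ∀ᵐ x ∂(volume : Measure ℝ), h * x ∉ Set.range a := by
    rw [ae_iff]
    simpa using hnull
  have hψ_aesm : AEStronglyMeasurable (fun x => ψ (h * x)) (volume : Measure ℝ) := by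
    have hU : MeasurableSet ((Set.range a)ᶜ : Set ℝ) :=
      (Set.finite_range a).isClosed.measurableSet.compl
    have h1 : AEMeasurable ψ ((volume : Measure ℝ).restrict (Set.range a)ᶜ) :=
      hψcont.aemeasurable hU
    have h2 : (volume : Measure ℝ).restrict (Set.range a)ᶜ = volume :=
      Measure.restrict_eq_self_of_ae_mem (by
        have : (volume : Measure ℝ) (Set.range a) = 0 :=
          (Set.finite_range a).countable.measure_zero _
        rw [ae_iff]
        simp only [Set.mem_compl_iff, not_not, Set.setOf_mem_eq]; exact this)
    rw [h2] at h1
    have hqmp : Measure.QuasiMeasurePreserving (fun x : ℝ => h * x) volume volume :=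
      ⟨measurable_const_mul h, by
        rw [Real.map_volume_mul_left hh']
        exact Measure.smul_absolutelyContinuous⟩
    exact (h1.comp_quasiMeasurePreserving hqmp).aestronglyMeasurable
  have hG2_int : Integrable (fun x => ψ (h * x) * p x) := by
    refine Integrable.mono' (hp_int.const_mul bΨ)
      (hψ_aesm.mul hp_meas.aestronglyMeasurable) ?_
    filter_upwards [hψae] with x hx
    rw [Real.norm_eq_abs, abs_mul, abs_of_nonneg (hp_nonneg x)]
    exact mul_le_mul_of_nonneg_right (hψbd _ hx) (hp_nonneg x)
  have hG_int : Integrable G := by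
    rw [hG_def]
    exact hG1_int.sub ((hG2_int.const_mul ((c:ℝ) * h)))
  -- limits of Fh at infinity
  have hmain_lim : ∀ l : Filter ℝ, Tendsto p l (𝓝 0) →
      Tendsto (fun x => Ψh (h * x) * q x) l (𝓝 0) := by
    intro l hpl
    apply squeeze_zero_norm (a := fun x => CΨ * ((c:ℝ) * p x))
    · intro x
      rw [Real.norm_eq_abs, abs_mul, hq_def]
      simp only [abs_neg]
      rw [abs_of_nonneg (mul_nonneg hc'.le (hp_nonneg x))]
      exact mul_le_mul_of_nonneg_right (hΨh_bd _) (mul_nonneg hc'.le (hp_nonneg x))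
    · have := (hpl.const_mul (c:ℝ)).const_mul CΨ
      simpa using this
  have hFh_bot : Tendsto Fh atBot (𝓝 0) := by
    have hS_t : Tendsto S atBot (𝓝 0) := by
      refine Tendsto.congr' ?_ tendsto_const_nhds
      have hev : ∀ᶠ x in atBot, ∀ i : Fin n, ¬ (a i / h < x) := by
        rw [eventually_all]
        intro i
        filter_upwards [eventually_le_atBot (a i / h)] with x hx
        exact not_lt.2 hx
      filter_upwards [hev] with x hx
      rw [hS_def]
      simp only
      rw [Finset.sum_congr rfl fun i _ => if_neg (hx i), Finset.sum_const, smul_zero]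
    have := (hmain_lim atBot hp_bot).sub hS_t
    simpa using this
  have hFh_top : Tendsto Fh atTop (𝓝 (0 - ∑ i, J i)) := by
    have hS_t : Tendsto S atTop (𝓝 (∑ i, J i)) := by
      refine Tendsto.congr' ?_ tendsto_const_nhds
      have hev : ∀ᶠ x in atTop, ∀ i : Fin n, a i / h < x := by
        rw [eventually_all]
        intro i
        exact eventually_gt_atTop (a i / h)
      filter_upwards [hev] with x hx
      rw [hS_def]
      simp only
      rw [Finset.sum_congr rfl fun i _ => if_pos (hx i)]
    exact (hmain_lim atTop hp_top).sub hS_t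
  have hG_val : ∫ x, G x = - ∑ i, J i := by
    rw [ftc_line T Fh G hFh_cont hFh_der hG_int hFh_bot hFh_top]
    ring
  -- transfer integrals over Ω to integrals against the density
  have htrans : ∀ f : ℝ → ℝ, AEStronglyMeasurable f (gaussianReal 0 c) →
      ∫ ω, f (X ω) ∂P = ∫ x, p x * f x := by
    intro f hf
    rw [← integral_map hX.aemeasurable (by rwa [hlaw]), hlaw,
      gaussianReal_of_var_ne_zero 0 hc.ne']
    have hgp : (gaussianPDF 0 c) = fun x => ((Real.toNNReal (p x) : NNReal) : ENNReal) := rfl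
    rw [hgp, integral_withDensity_eq_integral_smul (f := fun x => (p x).toNNReal)
      (measurable_real_toNNReal.comp hp_meas)]
    congr 1
    funext x
    rw [NNReal.smul_def, Real.coe_toNNReal _ (hp_nonneg x), smul_eq_mul]
  have hgauss_ac : gaussianReal 0 c ≪ (volume : Measure ℝ) :=
    gaussianReal_absolutelyContinuous 0 hc.ne'
  have hL : ∫ ω, Ψ (h * X ω) * X ω ∂P = ∫ x, p x * (Ψ (h * x) * x) :=
    htrans (fun x => Ψ (h * x) * x)
      (((hΨanti.measurable.comp (measurable_const_mul h)).mul
        measurable_id).aestronglyMeasurable)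
  have hψteq : ∀ x ∉ Set.range a, ψt x = ψ x := by
    intro x hx
    have hcA : ContinuousAt ψ x := hψcont.continuousAt
      (((Set.finite_range a).isClosed.isOpen_compl).mem_nhds hx)
    exact tendsto_nhds_unique (hψt x) (hcA.tendsto.mono_left nhdsWithin_le_nhds)
  have haeP : ∀ᵐ ω ∂P, h * X ω ∉ Set.range a := by
    have hset : MeasurableSet {x : ℝ | h * x ∈ Set.range a} :=
      (measurable_const_mul h) ((Set.finite_range a).measurableSet)
    have h0 : P (X ⁻¹' {x : ℝ | h * x ∈ Set.range a}) = 0 := by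
      have hmapped := Measure.map_apply (μ := P) hX hset
      rw [hlaw] at hmapped
      rw [← hmapped]
      exact hgauss_ac hnull
    rw [ae_iff]
    simpa [not_not] using h0
  have hR : ∫ ω, ψt (h * X ω) ∂P = ∫ x, p x * ψ (h * x) := by
    have h1 : ∫ ω, ψt (h * X ω) ∂P = ∫ ω, ψ (h * X ω) ∂P :=
      integral_congr_ae (haeP.mono fun ω hω => by
        show ψt (h * X ω) = ψ (h * X ω)
        exact hψteq _ hω)
    rw [h1]
    exact htrans (fun x => ψ (h * x)) (AEStronglyMeasurable.mono_ac hgauss_ac hψ_aesm)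
  have hGsplit : ∫ x, G x
      = (∫ x, p x * (Ψ (h * x) * x)) - (c:ℝ) * h * ∫ x, p x * ψ (h * x) := by
    rw [hG_def]
    rw [integral_sub hG1_int (hG2_int.const_mul _)]
    congr 1
    · apply integral_congr_ae
      apply Eventually.of_forall
      intro x
      ring
    · rw [MeasureTheory.integral_const_mul]
      congr 1
      apply integral_congr_ae
      apply Eventually.of_forall
      intro x
      ring
  have hJsum : ∑ i, J i
      = Real.sqrt c * ∑ i, (ΨL i - ΨR i) * normalPDF (a i / (h * Real.sqrt c)) := by
    rw [Finset.mul_sum]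
    refine Finset.sum_congr rfl fun i _ => ?_
    have hs : (0:ℝ) < Real.sqrt c := Real.sqrt_pos.2 hc'
    have h2π : (0:ℝ) < Real.sqrt (2 * Real.pi) := Real.sqrt_pos.2 (by positivity)
    have hkey : (c:ℝ) * p (a i / h) = Real.sqrt c * normalPDF ((a i / h) / Real.sqrt c) := by
      have hexp : (-((a i / h / Real.sqrt c) ^ 2) / 2)
          = -(a i / h - 0)^2 / (2 * (c:ℝ)) := by
        rw [div_pow, Real.sq_sqrt hc'.le]
        ring
      simp only [hp_def, gaussianPDFReal_def, normalPDF]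
      rw [hexp]
      rw [Real.sqrt_mul (by positivity : (0:ℝ) ≤ 2 * Real.pi)]
      have hcc : (c:ℝ) = Real.sqrt c * Real.sqrt c := (Real.mul_self_sqrt hc'.le).symm
      nth_rewrite 1 [hcc]
      field_simp
    rw [hJ_def]
    simp only
    rw [hkey, div_div]
    ring
  rw [hL, hR]
  have hfinal := hGsplit
  rw [hG_val, hJsum] at hfinal
  linarith [hfinal]


end
end

section
/- Under the smoothed-indicator test setup, suppose μ_j > 0 for all j ∈ {1,…,p}. Then Q → 1 in probability as T → ∞. (Theorem 1, part 2.) -/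
open MeasureTheory Filter Topology ProbabilityTheory Matrix

noncomputable section

/-- Convergence in distribution: weak convergence of the laws of `X_T` under `P`
to the measure `ν` (tested against bounded continuous functions). -/
def TendstoInDistrib {Ω : Type*} [MeasurableSpace Ω] (P : Measure Ω)
    {E : Type*} [MeasurableSpace E] [TopologicalSpace E]
    (X : ℕ → Ω → E) (ν : Measure E) : Prop :=
  ∀ f : BoundedContinuousFunction E ℝ,
    Tendsto (fun T => ∫ ω, f (X T ω) ∂P) atTop (nhds (∫ x, f x ∂ν))

/-- The standard normal CDF `Φ`. -/
def stdNormalCDF (x : ℝ) : ℝ := ∫ t in Set.Iic x, normalPDF t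

/-- The Gaussian measure `N(c, V)` on `ℝᵖ`: the pushforward of the product of `p`
standard Gaussian measures under `z ↦ c + V^{1/2}·z`, where `V^{1/2}` is the positive
semidefinite square root of `V`. -/
def gaussianPi {p : ℕ} (c : Fin p → ℝ) {V : Matrix (Fin p) (Fin p) ℝ}
    (hV : V.PosSemidef) : Measure (Fin p → ℝ) :=
  Measure.map (fun z => c + ((hV.1.eigenvectorUnitary : Matrix (Fin p) (Fin p) ℝ) *
      diagonal (fun i => Real.sqrt (hV.1.eigenvalues i)) *
      (star hV.1.eigenvectorUnitary : Matrix (Fin p) (Fin p) ℝ)).mulVec z)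
    (Measure.pi fun _ : Fin p => gaussianReal 0 1)

/-- `Ψ̂_{T,j} = Ψ(K(T)·θ̂_{T,j}·μ̂_{T,j})`. -/
def Psihat {p : ℕ} {Ω : Type*} (Ψ : ℝ → ℝ) (K : ℕ → ℝ)
    (muhat thetahat : ℕ → Ω → Fin p → ℝ) (T : ℕ) (ω : Ω) (j : Fin p) : ℝ :=
  Ψ (K T * thetahat T ω j * muhat T ω j)

/-- The statistic `Q₁ = √T·Σⱼ Ψ̂_{T,j}·θ̂_{T,j}·μ̂_{T,j} − Σⱼ Λ_T(θ̂_{T,j}·μ̂_{T,j}, θ̂_{T,j}²·v̂_{T,jj})`. -/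
def Q1stat {p : ℕ} {Ω : Type*} (Ψ ψt : ℝ → ℝ) {n : ℕ} (a ΨL ΨR : Fin n → ℝ)
    (K : ℕ → ℝ) (muhat : ℕ → Ω → Fin p → ℝ)
    (Vhat : ℕ → Ω → Matrix (Fin p) (Fin p) ℝ)
    (thetahat : ℕ → Ω → Fin p → ℝ) (T : ℕ) (ω : Ω) : ℝ :=
  Real.sqrt T * ∑ j, Psihat Ψ K muhat thetahat T ω j * thetahat T ω j * muhat T ω j
    - ∑ j, Lambda K ψt a ΨL ΨR T (thetahat T ω j * muhat T ω j)
        ((thetahat T ω j) ^ 2 * Vhat T ω j j)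

/-- The statistic `Q₂ = √(Σᵢ Σⱼ Ψ̂_{T,i}·θ̂_{T,i}·v̂_{T,ij}·θ̂_{T,j}·Ψ̂_{T,j})`. -/
def Q2stat {p : ℕ} {Ω : Type*} (Ψ : ℝ → ℝ) (K : ℕ → ℝ)
    (muhat : ℕ → Ω → Fin p → ℝ)
    (Vhat : ℕ → Ω → Matrix (Fin p) (Fin p) ℝ)
    (thetahat : ℕ → Ω → Fin p → ℝ) (T : ℕ) (ω : Ω) : ℝ :=
  Real.sqrt (∑ i, ∑ j, Psihat Ψ K muhat thetahat T ω i * thetahat T ω i *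
    Vhat T ω i j * thetahat T ω j * Psihat Ψ K muhat thetahat T ω j)

/-- The test statistic `Q = Φ(Q₁/Q₂)` if `Q₂ > 0`, and `Q = 1` if `Q₂ = 0`. -/
def Qstat {p : ℕ} {Ω : Type*} (Ψ ψt : ℝ → ℝ) {n : ℕ} (a ΨL ΨR : Fin n → ℝ)
    (K : ℕ → ℝ) (muhat : ℕ → Ω → Fin p → ℝ)
    (Vhat : ℕ → Ω → Matrix (Fin p) (Fin p) ℝ)
    (thetahat : ℕ → Ω → Fin p → ℝ) (T : ℕ) (ω : Ω) : ℝ :=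
  if 0 < Q2stat Ψ K muhat Vhat thetahat T ω then
    stdNormalCDF (Q1stat Ψ ψt a ΨL ΨR K muhat Vhat thetahat T ω /
      Q2stat Ψ K muhat Vhat thetahat T ω)
  else 1

/-! ### Auxiliary lemmas -/

section Aux

lemma integrable_normalPDF : Integrable normalPDF := by
  have h : Integrable (fun x : ℝ => Real.exp (-(1/2 : ℝ) * x ^ 2)) :=
    integrable_exp_neg_mul_sq (by norm_num)
  have h2 := h.div_const (Real.sqrt (2 * Real.pi))
  have : (fun x : ℝ => Real.exp (-(1/2 : ℝ) * x ^ 2) / Real.sqrt (2 * Real.pi)) = normalPDF := by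
    funext x
    unfold normalPDF
    ring_nf
  rwa [this] at h2

lemma integral_normalPDF : ∫ x, normalPDF x = 1 := by
  unfold normalPDF
  have : ∀ x : ℝ, Real.exp (-(x ^ 2) / 2) / Real.sqrt (2 * Real.pi)
      = Real.exp (-(1/2 : ℝ) * x ^ 2) / Real.sqrt (2 * Real.pi) := by
    intro x; ring_nf
  simp only [this]
  rw [integral_div, integral_gaussian]
  rw [show Real.pi / (1/2 : ℝ) = 2 * Real.pi by ring]
  rw [div_self]
  exact ne_of_gt (Real.sqrt_pos.2 (by positivity))

lemma stdNormalCDF_le_one (x : ℝ) : stdNormalCDF x ≤ 1 := by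
  rw [← integral_normalPDF]
  exact setIntegral_le_integral integrable_normalPDF (ae_of_all _ normalPDF_nonneg)

lemma stdNormalCDF_mono : Monotone stdNormalCDF := by
  intro x y hxy
  exact setIntegral_mono_set integrable_normalPDF.integrableOn
    (ae_of_all _ normalPDF_nonneg)
    (HasSubset.Subset.eventuallyLE (Set.Iic_subset_Iic.2 hxy))

lemma tendsto_stdNormalCDF_atTop : Tendsto stdNormalCDF atTop (𝓝 1) := by
  rw [← integral_normalPDF]
  exact (MeasureTheory.aecover_Iic
    (tendsto_id : Tendsto (id : ℝ → ℝ) atTop atTop)).integral_tendsto_of_countably_generated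
    integrable_normalPDF

lemma tendsto_sqrt_atTop : Tendsto Real.sqrt atTop atTop :=
  tendsto_atTop_atTop.2 fun b => ⟨b ^ 2, fun a ha => by
    calc b ≤ |b| := le_abs_self b
    _ = Real.sqrt (b ^ 2) := (Real.sqrt_sq_eq_abs b).symm
    _ ≤ Real.sqrt a := Real.sqrt_le_sqrt ha⟩

lemma tendsto_nat_sqrt_atTop : Tendsto (fun T : ℕ => Real.sqrt T) atTop atTop :=
  tendsto_sqrt_atTop.comp tendsto_natCast_atTop_atTop

section InProb

variable {Ω : Type*} [MeasurableSpace Ω] {P : Measure Ω}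

lemma tendsto_zero_of_le_ev {f g : ℕ → ENNReal} (h : ∀ᶠ T in atTop, f T ≤ g T)
    (hg : Tendsto g atTop (𝓝 0)) : Tendsto f atTop (𝓝 0) :=
  tendsto_of_tendsto_of_tendsto_of_le_of_le' tendsto_const_nhds hg
    (Eventually.of_forall fun _ => zero_le) h

lemma TendstoInProb.mul {X Y : ℕ → Ω → ℝ} {x y : ℝ}
    (hX : TendstoInProb P X x) (hY : TendstoInProb P Y y) :
    TendstoInProb P (fun T ω => X T ω * Y T ω) (x * y) := by
  intro ε hε
  set δ : ℝ := min 1 (ε / (1 + |x| + |y|)) with hδdef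
  have hδpos : 0 < δ := lt_min one_pos (div_pos hε (by positivity))
  have hkey : ∀ T, {ω | ε < |X T ω * Y T ω - x * y|} ⊆
      {ω | δ < |X T ω - x|} ∪ {ω | δ < |Y T ω - y|} := by
    intro T ω hω
    simp only [Set.mem_setOf_eq] at hω
    by_contra hcon
    simp only [Set.mem_union, Set.mem_setOf_eq, not_or, not_lt] at hcon
    obtain ⟨h1, h2⟩ := hcon
    have hδ1 : δ ≤ 1 := min_le_left _ _
    have hδ2 : δ * (1 + |x| + |y|) ≤ ε := by
      rw [hδdef]
      calc min 1 (ε / (1 + |x| + |y|)) * (1 + |x| + |y|)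
          ≤ (ε / (1 + |x| + |y|)) * (1 + |x| + |y|) := by
            apply mul_le_mul_of_nonneg_right (min_le_right _ _) (by positivity)
        _ = ε := div_mul_cancel₀ _ (by positivity)
    have hident : X T ω * Y T ω - x * y
        = (X T ω - x) * (Y T ω - y) + x * (Y T ω - y) + y * (X T ω - x) := by ring
    have : |X T ω * Y T ω - x * y| ≤ δ * δ + |x| * δ + |y| * δ := by
      rw [hident]
      calc |(X T ω - x) * (Y T ω - y) + x * (Y T ω - y) + y * (X T ω - x)|
          ≤ |(X T ω - x) * (Y T ω - y) + x * (Y T ω - y)| + |y * (X T ω - x)| := abs_add_le _ _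
        _ ≤ |(X T ω - x) * (Y T ω - y)| + |x * (Y T ω - y)| + |y * (X T ω - x)| := by
            have := abs_add_le ((X T ω - x) * (Y T ω - y)) (x * (Y T ω - y))
            linarith
        _ ≤ δ * δ + |x| * δ + |y| * δ := by
            rw [abs_mul, abs_mul, abs_mul]
            have hx0 := abs_nonneg (X T ω - x)
            have hy0 := abs_nonneg (Y T ω - y)
            have := mul_le_mul h1 h2 hy0 hδpos.le
            have := mul_le_mul_of_nonneg_left h2 (abs_nonneg x)
            have := mul_le_mul_of_nonneg_left h1 (abs_nonneg y)
            linarith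
    have hcontra : |X T ω * Y T ω - x * y| ≤ ε := by
      calc |X T ω * Y T ω - x * y| ≤ δ * δ + |x| * δ + |y| * δ := this
        _ ≤ δ * 1 + |x| * δ + |y| * δ := by nlinarith
        _ = δ * (1 + |x| + |y|) := by ring
        _ ≤ ε := hδ2
    linarith
  apply tendsto_zero_of_le_ev (Eventually.of_forall fun T =>
    le_trans (measure_mono (hkey T)) (measure_union_le _ _))
  have := (hX δ hδpos).add (hY δ hδpos)
  simpa using this

lemma TendstoInProb.abs {X : ℕ → Ω → ℝ} {x : ℝ} (hX : TendstoInProb P X x) :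
    TendstoInProb P (fun T ω => |X T ω|) |x| := by
  intro ε hε
  apply tendsto_zero_of_le_ev (Eventually.of_forall fun T => measure_mono ?_) (hX ε hε)
  intro ω hω
  simp only [Set.mem_setOf_eq] at hω ⊢
  exact lt_of_lt_of_le hω (abs_abs_sub_abs_le_abs_sub _ _)

lemma TendstoInProb.prob_ge_zero {Z : ℕ → Ω → ℝ} {z B : ℝ}
    (h : TendstoInProb P Z z) (hB : z < B) :
    Tendsto (fun T => P {ω | B ≤ Z T ω}) atTop (𝓝 0) := by
  apply tendsto_zero_of_le_ev (Eventually.of_forall fun T => measure_mono ?_)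
    (h ((B - z) / 2) (by linarith))
  intro ω hω
  simp only [Set.mem_setOf_eq] at hω ⊢
  have : (B - z) / 2 < Z T ω - z := by linarith
  exact lt_of_lt_of_le this (le_abs_self _)

lemma TendstoInProb.prob_le_zero {Z : ℕ → Ω → ℝ} {z b : ℝ}
    (h : TendstoInProb P Z z) (hb : b < z) :
    Tendsto (fun T => P {ω | Z T ω ≤ b}) atTop (𝓝 0) := by
  apply tendsto_zero_of_le_ev (Eventually.of_forall fun T => measure_mono ?_)
    (h ((z - b) / 2) (by linarith))
  intro ω hω
  simp only [Set.mem_setOf_eq] at hω ⊢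
  have : (z - b) / 2 < z - Z T ω := by linarith
  exact lt_of_lt_of_le this (neg_le_abs _ |>.trans_eq' (by rw [neg_sub]))

end InProb

end Aux

section Cutoff

/-- A continuous cutoff function on `ℝᵖ`: `x ↦ min 1 (max (|x j| − k) 0)`. -/
def cutoff {p : ℕ} (j : Fin p) (k : ℝ) : BoundedContinuousFunction (Fin p → ℝ) ℝ :=
  BoundedContinuousFunction.mkOfBound
    ⟨fun x => min 1 (max (|x j| - k) 0),
      continuous_const.min ((((continuous_apply j).abs.sub continuous_const).max
        continuous_const))⟩ 1
    (by
      intro x y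
      have h1 : ∀ z : Fin p → ℝ, 0 ≤ min 1 (max (|z j| - k) 0) :=
        fun z => le_min one_pos.le (le_max_right _ _)
      have h2 : ∀ z : Fin p → ℝ, min 1 (max (|z j| - k) 0) ≤ 1 := fun z => min_le_left _ _
      rw [Real.dist_eq, abs_sub_le_iff]
      constructor <;> simp only [ContinuousMap.coe_mk] <;>
        [linarith [h1 y, h2 x]; linarith [h1 x, h2 y]])

lemma cutoff_nonneg {p : ℕ} (j : Fin p) (k : ℝ) (x : Fin p → ℝ) : 0 ≤ cutoff j k x :=
  le_min one_pos.le (le_max_right _ _)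

lemma cutoff_le_one {p : ℕ} (j : Fin p) (k : ℝ) (x : Fin p → ℝ) : cutoff j k x ≤ 1 :=
  min_le_left _ _

lemma cutoff_eq_one {p : ℕ} (j : Fin p) (k : ℝ) (x : Fin p → ℝ) (h : k + 1 ≤ |x j|) :
    cutoff j k x = 1 := by
  have : (1 : ℝ) ≤ max (|x j| - k) 0 := le_max_of_le_left (by linarith)
  exact min_eq_left this

lemma cutoff_eq_zero {p : ℕ} (j : Fin p) (k : ℝ) (x : Fin p → ℝ) (h : |x j| < k) :
    cutoff j k x = 0 := by
  have : max (|x j| - k) 0 = 0 := max_eq_right (by linarith)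
  show min 1 (max (|x j| - k) 0) = 0
  rw [this]
  exact min_eq_right one_pos.le

end Cutoff

section InProbOfDistrib

variable {Ω : Type*} [MeasurableSpace Ω]

/-- Convergence in distribution to a probability measure implies a `1/√T`-scaled
sequence converges in probability. -/
lemma tendstoInProb_of_tendstoInDistrib (P : Measure Ω) [IsProbabilityMeasure P]
    {p : ℕ} (μ : Fin p → ℝ) (muhat : ℕ → Ω → Fin p → ℝ) (ν : Measure (Fin p → ℝ))
    [IsProbabilityMeasure ν]
    (hD1 : TendstoInDistrib P (fun T ω j => Real.sqrt T * (muhat T ω j - μ j)) ν)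
    (j : Fin p) : TendstoInProb P (fun T ω => muhat T ω j) (μ j) := by
  intro ε hε
  rw [ENNReal.tendsto_nhds_zero]
  intro δ hδ
  -- a positive real smaller than δ
  set r : ℝ := (min δ 1).toReal / 4 with hrdef
  have hmpos : (0 : ENNReal) < min δ 1 := lt_min hδ one_pos
  have hmne : min δ 1 ≠ ⊤ := ne_top_of_le_ne_top ENNReal.one_ne_top (min_le_right _ _)
  have hr : 0 < r := by
    apply div_pos _ (by norm_num)
    exact ENNReal.toReal_pos (ne_of_gt hmpos) hmne
  -- choose the truncation level k
  have hS : Tendsto (fun k : ℕ => ν {x | (k : ℝ) ≤ |x j|}) atTop (𝓝 0) := by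
    have hmeas : ∀ k : ℕ, MeasurableSet {x : Fin p → ℝ | (k : ℝ) ≤ |x j|} :=
      fun k => measurableSet_le measurable_const (measurable_pi_apply j).abs
    have hanti : Antitone fun k : ℕ => {x : Fin p → ℝ | (k : ℝ) ≤ |x j|} := by
      intro k l hkl x hx
      simp only [Set.mem_setOf_eq] at hx ⊢
      exact le_trans (by exact_mod_cast hkl) hx
    have hempty : ⋂ k : ℕ, {x : Fin p → ℝ | (k : ℝ) ≤ |x j|} = ∅ := by
      ext x
      simp only [Set.mem_iInter, Set.mem_setOf_eq, Set.mem_empty_iff_false, iff_false, not_forall,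
        not_le]
      exact exists_nat_gt |x j|
    have := tendsto_measure_iInter_atTop (fun k => (hmeas k).nullMeasurableSet) hanti
      ⟨0, measure_ne_top ν _⟩
    rw [hempty] at this
    simpa [Function.comp_def] using this
  obtain ⟨k, hk⟩ : ∃ k : ℕ, ν {x | (k : ℝ) ≤ |x j|} < ENNReal.ofReal r := by
    have := (hS.eventually (eventually_lt_nhds (by simp [hr] : (0:ENNReal) < ENNReal.ofReal r)))
    exact this.exists
  set f := cutoff j (k : ℝ) with hfdef
  set Z : ℕ → Ω → Fin p → ℝ := fun T ω j => Real.sqrt T * (muhat T ω j - μ j) with hZdef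
  -- bound the limit integral
  have hL : ∫ x, f x ∂ν ≤ r := by
    have hmeasS : MeasurableSet {x : Fin p → ℝ | (k : ℝ) ≤ |x j|} :=
      measurableSet_le measurable_const (measurable_pi_apply j).abs
    have hle : ∀ x, f x ≤ Set.indicator {x : Fin p → ℝ | (k : ℝ) ≤ |x j|} (fun _ => (1:ℝ)) x := by
      intro x
      by_cases hx : (k : ℝ) ≤ |x j|
      · rw [Set.indicator_of_mem (show x ∈ {x : Fin p → ℝ | (k : ℝ) ≤ |x j|} from hx)]
        exact cutoff_le_one _ _ _
      · rw [Set.indicator_of_notMem (show x ∉ {x : Fin p → ℝ | (k : ℝ) ≤ |x j|} from hx)]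
        exact le_of_eq (cutoff_eq_zero _ _ _ (not_le.1 hx))
    calc ∫ x, f x ∂ν ≤ ∫ x, Set.indicator {x : Fin p → ℝ | (k : ℝ) ≤ |x j|}
          (fun _ => (1:ℝ)) x ∂ν :=
          integral_mono (f.integrable ν) ((integrable_const 1).indicator hmeasS) hle
      _ = (ν {x | (k : ℝ) ≤ |x j|}).toReal := by
          rw [integral_indicator_const _ hmeasS]; simp [measureReal_def]
      _ ≤ r := ENNReal.toReal_le_of_le_ofReal hr.le hk.le
  -- integrals of f ∘ Z converge
  have h1 := hD1 f
  have h2 := hD1 ((1 : BoundedContinuousFunction (Fin p → ℝ) ℝ) - f)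
  have hg_int : ∫ x, ((1 : BoundedContinuousFunction (Fin p → ℝ) ℝ) - f) x ∂ν
      = 1 - ∫ x, f x ∂ν := by
    simp only [BoundedContinuousFunction.coe_sub, BoundedContinuousFunction.coe_one, Pi.sub_apply,
      Pi.one_apply]
    rw [integral_sub (integrable_const 1) (f.integrable ν)]
    simp
  rw [hg_int] at h2
  have hsum : Tendsto (fun T => (∫ ω, f (Z T ω) ∂P) +
      ∫ ω, ((1 : BoundedContinuousFunction (Fin p → ℝ) ℝ) - f) (Z T ω) ∂P) atTop (𝓝 1) := by
    have := h1.add h2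
    simpa using this
  -- eventually f ∘ Z T is integrable
  have hev_int : ∀ᶠ T in atTop, Integrable (fun ω => f (Z T ω)) P := by
    filter_upwards [hsum.eventually (eventually_gt_nhds (by norm_num : (1:ℝ)/2 < 1))] with T hT
    by_contra hni
    have hF0 : (∫ ω, f (Z T ω) ∂P) = 0 := integral_undef hni
    have hni2 : ¬ Integrable (fun ω =>
        ((1 : BoundedContinuousFunction (Fin p → ℝ) ℝ) - f) (Z T ω)) P := by
      intro hint
      apply hni
      have : (fun ω => f (Z T ω)) = fun ω =>
          1 - ((1 : BoundedContinuousFunction (Fin p → ℝ) ℝ) - f) (Z T ω) := by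
        funext ω; simp
      rw [this]
      exact (integrable_const 1).sub hint
    have hG0 : (∫ ω, ((1 : BoundedContinuousFunction (Fin p → ℝ) ℝ) - f) (Z T ω) ∂P) = 0 :=
      integral_undef hni2
    rw [hF0, hG0] at hT
    norm_num at hT
  -- eventually the integral of f ∘ Z is small
  have hev_small : ∀ᶠ T in atTop, (∫ ω, f (Z T ω) ∂P) ≤ 2 * r := by
    filter_upwards [h1.eventually (eventually_lt_nhds
      (by linarith : (∫ x, f x ∂ν) < (∫ x, f x ∂ν) + r))] with T hT
    linarith
  -- eventually ε √T is big
  have hev_big : ∀ᶠ T : ℕ in atTop, (k : ℝ) + 1 ≤ ε * Real.sqrt (T : ℝ) := by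
    have : Tendsto (fun T : ℕ => ε * Real.sqrt T) atTop atTop :=
      tendsto_nat_sqrt_atTop.const_mul_atTop hε
    exact this.eventually_ge_atTop _
  filter_upwards [hev_int, hev_small, hev_big] with T hint hsmall hbig
  -- the bad event is contained in {f ∘ Z = 1}
  have hsub : {ω | ε < |muhat T ω j - μ j|} ⊆ {ω | (1:ℝ) ≤ f (Z T ω)} := by
    intro ω hω
    simp only [Set.mem_setOf_eq] at hω ⊢
    have hZj : |Z T ω j| = Real.sqrt T * |muhat T ω j - μ j| := by
      rw [hZdef]; rw [abs_mul, abs_of_nonneg (Real.sqrt_nonneg _)]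
    have : (k : ℝ) + 1 ≤ |Z T ω j| := by
      rw [hZj]
      calc (k : ℝ) + 1 ≤ ε * Real.sqrt T := hbig
        _ ≤ Real.sqrt T * |muhat T ω j - μ j| := by
          rw [mul_comm]
          exact mul_le_mul_of_nonneg_left hω.le (Real.sqrt_nonneg _)
    rw [cutoff_eq_one j _ _ this]
  -- Markov's inequality via an a.e. measurable replacement
  set F : Ω → ℝ := fun ω => f (Z T ω) with hFdef
  set h : Ω → ℝ := hint.1.mk F with hhdef
  have hae : F =ᵐ[P] h := hint.1.ae_eq_mk
  have hinth : Integrable h P := hint.congr hae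
  have hnn : 0 ≤ᵐ[P] h := by
    filter_upwards [hae] with ω hω
    rw [← hω]
    exact cutoff_nonneg _ _ _
  have hmarkov := mul_meas_ge_le_integral_of_nonneg hnn hinth 1
  rw [one_mul] at hmarkov
  have hinteq : ∫ ω, h ω ∂P = ∫ ω, F ω ∂P := (integral_congr_ae hae).symm
  have hPh : P {ω | 1 ≤ h ω} ≤ ENNReal.ofReal (2 * r) := by
    rw [← ENNReal.ofReal_toReal (measure_ne_top P {ω | 1 ≤ h ω})]
    apply ENNReal.ofReal_le_ofReal
    calc (P {ω | 1 ≤ h ω}).toReal ≤ ∫ ω, h ω ∂P := hmarkov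
      _ = ∫ ω, F ω ∂P := hinteq
      _ ≤ 2 * r := hsmall
  have hdiff : P {ω | F ω ≠ h ω} = 0 := ae_iff.1 hae
  calc P {ω | ε < |muhat T ω j - μ j|} ≤ P ({ω | 1 ≤ h ω} ∪ {ω | F ω ≠ h ω}) := by
        apply measure_mono
        intro ω hω
        have h1F : (1:ℝ) ≤ F ω := hsub hω
        by_cases heq : F ω = h ω
        · exact Or.inl (by simp only [Set.mem_setOf_eq]; rw [← heq]; exact h1F)
        · exact Or.inr heq
    _ ≤ P {ω | 1 ≤ h ω} + P {ω | F ω ≠ h ω} := measure_union_le _ _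
    _ ≤ ENNReal.ofReal (2 * r) + 0 := add_le_add hPh (le_of_eq hdiff)
    _ ≤ δ := by
        rw [add_zero, hrdef]
        calc ENNReal.ofReal (2 * ((min δ 1).toReal / 4))
            ≤ ENNReal.ofReal ((min δ 1).toReal) := by
              apply ENNReal.ofReal_le_ofReal
              have := ENNReal.toReal_nonneg (a := min δ 1)
              linarith
          _ = min δ 1 := ENNReal.ofReal_toReal hmne
          _ ≤ δ := min_le_left _ _

end InProbOfDistrib

/-- The Gaussian measure `gaussianPi` is a probability measure. -/
lemma isProbabilityMeasure_gaussianPi {p : ℕ} (c : Fin p → ℝ)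
    {V : Matrix (Fin p) (Fin p) ℝ} (hV : V.PosSemidef) :
    IsProbabilityMeasure (gaussianPi c hV) := by
  unfold gaussianPi
  have hcont : Continuous fun z : Fin p → ℝ => c + ((hV.1.eigenvectorUnitary : Matrix (Fin p) (Fin p) ℝ) *
      diagonal (fun i => Real.sqrt (hV.1.eigenvalues i)) *
      (star hV.1.eigenvectorUnitary : Matrix (Fin p) (Fin p) ℝ)).mulVec z := by
    apply continuous_const.add
    apply continuous_pi
    intro i
    simp only [Matrix.mulVec, dotProduct]
    exact continuous_finset_sum _ fun j _ => continuous_const.mul (continuous_apply j)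
  exact Measure.isProbabilityMeasure_map hcont.measurable.aemeasurable

/-- Diagonal entries of a positive semidefinite real matrix are nonnegative. -/
lemma posSemidef_diag_nonneg {p : ℕ} {M : Matrix (Fin p) (Fin p) ℝ}
    (h : M.PosSemidef) (j : Fin p) : 0 ≤ M j j := by
  exact h.diag_nonneg

/-- The key deterministic bound: on the good event, `Q` is at least `Φ(√T·c/√B)`. -/
lemma core_bound {p n : ℕ} {Ω : Type*} (Ψ ψt : ℝ → ℝ) (a ΨL ΨR : Fin n → ℝ)
    (K : ℕ → ℝ) (muhat thetahat : ℕ → Ω → Fin p → ℝ)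
    (Vhat : ℕ → Ω → Matrix (Fin p) (Fin p) ℝ)
    (hΨ01 : ∀ x : ℝ, 0 ≤ Ψ x ∧ Ψ x ≤ 1) (hψt : ∀ x, ψt x ≤ 0)
    (hjump : ∀ i, ΨR i ≤ ΨL i) (T : ℕ) (ω : Ω) (hK : 0 < K T)
    (hPSD : (Vhat T ω).PosSemidef) (hθ : ∀ j, 0 < thetahat T ω j)
    {c B : ℝ} (hc : 0 < c) (hB : 0 < B)
    (hcm : ∀ j, c ≤ thetahat T ω j * muhat T ω j)
    (hBm : ∀ i j, thetahat T ω i * thetahat T ω j * |Vhat T ω i j| ≤ B) :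
    stdNormalCDF (Real.sqrt T * c / Real.sqrt B)
      ≤ Qstat Ψ ψt a ΨL ΨR K muhat Vhat thetahat T ω := by
  set Ph := Psihat Ψ K muhat thetahat T ω with hPhdef
  have hPh0 : ∀ j, 0 ≤ Ph j := fun j => (hΨ01 _).1
  set S := ∑ j, Ph j with hSdef
  have hS0 : 0 ≤ S := Finset.sum_nonneg fun j _ => hPh0 j
  have hsum_le : (∑ i, ∑ j, Ph i * thetahat T ω i * Vhat T ω i j * thetahat T ω j * Ph j)
      ≤ B * S ^ 2 := by
    calc (∑ i, ∑ j, Ph i * thetahat T ω i * Vhat T ω i j * thetahat T ω j * Ph j)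
        ≤ ∑ i, ∑ j, B * (Ph i * Ph j) := by
          apply Finset.sum_le_sum; intro i _
          apply Finset.sum_le_sum; intro j _
          have hmid : thetahat T ω i * Vhat T ω i j * thetahat T ω j ≤ B := by
            have h1 : thetahat T ω i * Vhat T ω i j * thetahat T ω j
                ≤ thetahat T ω i * thetahat T ω j * |Vhat T ω i j| := by
              nlinarith [hθ i, hθ j, le_abs_self (Vhat T ω i j),
                mul_pos (hθ i) (hθ j)]
            exact h1.trans (hBm i j)
          have hPP : 0 ≤ Ph i * Ph j := mul_nonneg (hPh0 i) (hPh0 j)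
          nlinarith [hPP, hmid]
      _ = B * S ^ 2 := by
          simp_rw [← Finset.mul_sum]
          rw [← Finset.sum_mul, ← hSdef]
          ring
  have hQ2le : Q2stat Ψ K muhat Vhat thetahat T ω ≤ Real.sqrt B * S := by
    show Real.sqrt _ ≤ _
    calc Real.sqrt (∑ i, ∑ j, Ph i * thetahat T ω i * Vhat T ω i j * thetahat T ω j * Ph j)
        ≤ Real.sqrt (B * S ^ 2) := Real.sqrt_le_sqrt hsum_le
      _ = Real.sqrt B * S := by
          rw [Real.sqrt_mul hB.le, Real.sqrt_sq hS0]
  by_cases h2 : 0 < Q2stat Ψ K muhat Vhat thetahat T ω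
  · rw [Qstat, if_pos h2]
    apply stdNormalCDF_mono
    have hS : 0 < S := by
      by_contra hns
      push_neg at hns
      have hSe : S = 0 := le_antisymm hns hS0
      rw [hSe, mul_zero] at hQ2le
      linarith
    have hΛ : ∀ j, Lambda K ψt a ΨL ΨR T (thetahat T ω j * muhat T ω j)
        ((thetahat T ω j) ^ 2 * Vhat T ω j j) ≤ 0 := by
      intro j
      rw [Lambda]
      set v := (thetahat T ω j) ^ 2 * Vhat T ω j j with hvdef
      have hv : 0 ≤ v := mul_nonneg (sq_nonneg _) (posSemidef_diag_nonneg hPSD j)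
      have t1 : v * ψt (K T * (thetahat T ω j * muhat T ω j)) * K T / Real.sqrt T ≤ 0 := by
        apply div_nonpos_of_nonpos_of_nonneg _ (Real.sqrt_nonneg _)
        have h1 : v * ψt (K T * (thetahat T ω j * muhat T ω j)) ≤ 0 :=
          mul_nonpos_iff.2 (Or.inl ⟨hv, hψt _⟩)
        exact mul_nonpos_iff.2 (Or.inr ⟨h1, hK.le⟩)
      have t2 : 0 ≤ Real.sqrt v * ∑ i, (ΨL i - ΨR i) *
          normalPDF (a i * Real.sqrt T / (Real.sqrt v * K T)) :=
        mul_nonneg (Real.sqrt_nonneg _) (Finset.sum_nonneg fun i _ =>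
          mul_nonneg (sub_nonneg.2 (hjump i)) (normalPDF_nonneg _))
      linarith
    have hQ1 : Real.sqrt T * c * S ≤ Q1stat Ψ ψt a ΨL ΨR K muhat Vhat thetahat T ω := by
      rw [Q1stat]
      have hsum2 : c * S ≤ ∑ j, Ph j * thetahat T ω j * muhat T ω j := by
        rw [hSdef, Finset.mul_sum]
        apply Finset.sum_le_sum; intro j _
        calc c * Ph j = Ph j * c := mul_comm _ _
          _ ≤ Ph j * (thetahat T ω j * muhat T ω j) :=
              mul_le_mul_of_nonneg_left (hcm j) (hPh0 j)
          _ = Ph j * thetahat T ω j * muhat T ω j := by ring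
      have hΛsum : (∑ j, Lambda K ψt a ΨL ΨR T (thetahat T ω j * muhat T ω j)
          ((thetahat T ω j) ^ 2 * Vhat T ω j j)) ≤ 0 :=
        Finset.sum_nonpos fun j _ => hΛ j
      have hmul := mul_le_mul_of_nonneg_left hsum2 (Real.sqrt_nonneg (T : ℝ))
      have : Real.sqrt T * c * S = Real.sqrt T * (c * S) := by ring
      rw [this]
      linarith
    have hBpos : 0 < Real.sqrt B := Real.sqrt_pos.2 hB
    rw [div_le_div_iff₀ hBpos h2]
    have h3 : Real.sqrt T * c * Q2stat Ψ K muhat Vhat thetahat T ω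
        ≤ Real.sqrt T * c * (Real.sqrt B * S) :=
      mul_le_mul_of_nonneg_left hQ2le (mul_nonneg (Real.sqrt_nonneg _) hc.le)
    calc Real.sqrt T * c * Q2stat Ψ K muhat Vhat thetahat T ω
        ≤ Real.sqrt T * c * (Real.sqrt B * S) := h3
      _ = Real.sqrt B * (Real.sqrt T * c * S) := by ring
      _ ≤ Real.sqrt B * Q1stat Ψ ψt a ΨL ΨR K muhat Vhat thetahat T ω :=
          mul_le_mul_of_nonneg_left hQ1 hBpos.le
      _ = Q1stat Ψ ψt a ΨL ΨR K muhat Vhat thetahat T ω * Real.sqrt B := mul_comm _ _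
  · rw [Qstat, if_neg h2]
    exact stdNormalCDF_le_one _

/-- Theorem 1, part 2: if all constraints are strictly non-binding, `Q → 1` in probability. -/
theorem Q_tendsto_one_under_null_interior
    {Ω : Type*} [MeasurableSpace Ω] (P : Measure Ω) [IsProbabilityMeasure P]
    {p : ℕ} (hp : 0 < p)
    -- the smoothed indicator
    (Ψ ψ ψt : ℝ → ℝ) {n : ℕ} (a ΨL ΨR : Fin n → ℝ) (bΨ : ℝ)
    (hΨanti : Antitone Ψ) (hΨ01 : ∀ x : ℝ, 0 ≤ Ψ x ∧ Ψ x ≤ 1) (hΨ0 : 0 < Ψ 0)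
    (ha : StrictMono a) (hane : ∀ i, a i ≠ 0)
    (hderiv : ∀ x ∉ Set.range a, HasDerivAt Ψ (ψ x) x)
    (hψcont : ContinuousOn ψ (Set.range a)ᶜ)
    (hψbd : ∀ x ∉ Set.range a, |ψ x| ≤ bΨ)
    (hψt : ∀ x : ℝ, Tendsto ψ (nhdsWithin x (Set.Iio x)) (nhds (ψt x)))
    (hΨL : ∀ i, Tendsto Ψ (nhdsWithin (a i) (Set.Iio (a i))) (nhds (ΨL i)))
    (hΨR : ∀ i, Tendsto Ψ (nhdsWithin (a i) (Set.Ioi (a i))) (nhds (ΨR i)))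
    -- the tuning sequence
    (K : ℕ → ℝ) (hKpos : ∀ T, 0 < K T) (hKmono : StrictMono K)
    (hKtop : Tendsto K atTop atTop)
    (hKo : Tendsto (fun T : ℕ => K T / Real.sqrt T) atTop (nhds 0))
    (hA6 : ∀ x : ℝ, 0 < x →
      Tendsto (fun T : ℕ => Real.sqrt T * Ψ (K T * x)) atTop (nhds 0))
    -- the data
    (muhat thetahat : ℕ → Ω → Fin p → ℝ)
    (Vhat : ℕ → Ω → Matrix (Fin p) (Fin p) ℝ)
    (hVhatPSD : ∀ T, ∀ᵐ ω ∂P, (Vhat T ω).PosSemidef)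
    (hthetahatpos : ∀ T, ∀ᵐ ω ∂P, ∀ j, 0 < thetahat T ω j)
    -- the parameters
    (μ : Fin p → ℝ) (V : Matrix (Fin p) (Fin p) ℝ) (hV : V.PosSemidef)
    (θ : Fin p → ℝ) (hθpos : ∀ j, 0 < θ j)
    -- [D1] : √T·(μ̂_T − μ) converges in distribution to N(0, V)
    (hD1 : TendstoInDistrib P
      (fun T ω j => Real.sqrt T * (muhat T ω j - μ j)) (gaussianPi 0 hV))
    -- [D2] : V·Δ·d(μ) ≠ 0 whenever d(μ) ≠ 0
    (hD2 : (fun j => if μ j < 0 then (1 : ℝ) else if μ j = 0 then Ψ 0 else 0) ≠ 0 →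
      V.mulVec (fun j =>
        θ j * (if μ j < 0 then (1 : ℝ) else if μ j = 0 then Ψ 0 else 0)) ≠ 0)
    -- [D3] : V̂_T → V in probability entrywise
    (hD3 : ∀ i j, TendstoInProb P (fun T ω => Vhat T ω i j) (V i j))
    -- [D4] : θ̂_T → θ in probability
    (hD4 : ∀ j, TendstoInProb P (fun T ω => thetahat T ω j) (θ j))
    -- all inequalities are strictly non-binding
    (hpos : ∀ j, 0 < μ j) :
    TendstoInProb P (Qstat Ψ ψt a ΨL ΨR K muhat Vhat thetahat) 1 := by
  haveI : IsProbabilityMeasure (gaussianPi (0 : Fin p → ℝ) hV) :=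
    isProbabilityMeasure_gaussianPi 0 hV
  haveI : Nonempty (Fin p) := ⟨⟨0, hp⟩⟩
  -- ψ is nonpositive away from the corner points
  have hψ_nonpos : ∀ y, y ∉ Set.range a → ψ y ≤ 0 := by
    intro y hy
    have hslope := hasDerivAt_iff_tendsto_slope.1 (hderiv y hy)
    have hright : Tendsto (slope Ψ y) (𝓝[>] y) (𝓝 (ψ y)) :=
      hslope.mono_left (nhdsWithin_mono _ fun z hz => ne_of_gt hz)
    refine le_of_tendsto hright ?_
    filter_upwards [self_mem_nhdsWithin] with z hz
    rw [slope_def_field]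
    apply div_nonpos_of_nonpos_of_nonneg
    · have := hΨanti (le_of_lt hz)
      linarith
    · have : y < z := hz
      linarith
  -- the left limit of ψ is everywhere nonpositive
  have hψt_nonpos : ∀ x : ℝ, ψt x ≤ 0 := by
    intro x
    refine le_of_tendsto (hψt x) ?_
    have hfin : (Set.range a \ {x}).Finite := (Set.finite_range a).subset Set.diff_subset
    have hopen : IsOpen (Set.range a \ {x})ᶜ := hfin.isClosed.isOpen_compl
    have hx : x ∈ (Set.range a \ {x})ᶜ := fun h => h.2 rfl
    filter_upwards [mem_nhdsWithin_of_mem_nhds (hopen.mem_nhds hx), self_mem_nhdsWithin]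
      with y hyU hylt
    apply hψ_nonpos
    intro hyr
    exact hyU ⟨hyr, fun hxy => absurd hxy (ne_of_lt hylt)⟩
  -- the jumps of Ψ are downward
  have hjump : ∀ i, ΨR i ≤ ΨL i := by
    intro i
    have hL : Ψ (a i) ≤ ΨL i := by
      refine ge_of_tendsto (hΨL i) ?_
      filter_upwards [self_mem_nhdsWithin] with y hy
      exact hΨanti (le_of_lt hy)
    have hR : ΨR i ≤ Ψ (a i) := by
      refine le_of_tendsto (hΨR i) ?_
      filter_upwards [self_mem_nhdsWithin] with y hy
      exact hΨanti (le_of_lt hy)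
    linarith
  -- convergence in probability of the estimators
  have hMu : ∀ j, TendstoInProb P (fun T ω => muhat T ω j) (μ j) := fun j =>
    tendstoInProb_of_tendstoInDistrib P μ muhat (gaussianPi (0 : Fin p → ℝ) hV) hD1 j
  have hTM : ∀ j, TendstoInProb P (fun T ω => thetahat T ω j * muhat T ω j) (θ j * μ j) :=
    fun j => (hD4 j).mul (hMu j)
  have hTVT : ∀ i j, TendstoInProb P
      (fun T ω => thetahat T ω i * thetahat T ω j * |Vhat T ω i j|) (θ i * θ j * |V i j|) :=
    fun i j => ((hD4 i).mul (hD4 j)).mul (hD3 i j).abs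
  -- the constants
  set c : ℝ := (Finset.univ.inf' Finset.univ_nonempty fun j => θ j * μ j) / 2 with hcdef
  have hinfpos : 0 < Finset.univ.inf' Finset.univ_nonempty fun j => θ j * μ j := by
    rw [Finset.lt_inf'_iff]
    exact fun j _ => mul_pos (hθpos j) (hpos j)
  have hc : 0 < c := div_pos hinfpos two_pos
  have hcj : ∀ j, c < θ j * μ j := by
    intro j
    calc c < Finset.univ.inf' Finset.univ_nonempty fun j => θ j * μ j := half_lt_self hinfpos
      _ ≤ θ j * μ j := Finset.inf'_le _ (Finset.mem_univ j)
  set B : ℝ := (Finset.univ.sup' Finset.univ_nonempty fun ij : Fin p × Fin p =>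
      θ ij.1 * θ ij.2 * |V ij.1 ij.2|) + 1 with hBdef
  have hsup0 : (0:ℝ) ≤ Finset.univ.sup' Finset.univ_nonempty fun ij : Fin p × Fin p =>
      θ ij.1 * θ ij.2 * |V ij.1 ij.2| := by
    obtain ⟨i⟩ := (inferInstance : Nonempty (Fin p))
    refine le_trans ?_ (Finset.le_sup'
      (fun ij : Fin p × Fin p => θ ij.1 * θ ij.2 * |V ij.1 ij.2|) (Finset.mem_univ (i, i)))
    exact mul_nonneg (mul_nonneg (hθpos i).le (hθpos i).le) (abs_nonneg _)
  have hB : 0 < B := by rw [hBdef]; linarith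
  have hBij : ∀ i j, θ i * θ j * |V i j| < B := fun i j =>
    lt_of_le_of_lt (Finset.le_sup'
      (fun ij : Fin p × Fin p => θ ij.1 * θ ij.2 * |V ij.1 ij.2|)
      (Finset.mem_univ ((i, j) : Fin p × Fin p))) (by rw [hBdef]; exact lt_add_one _)
  -- the CDF lower bound tends to 1
  have hcdf_lim : Tendsto (fun T : ℕ => stdNormalCDF (Real.sqrt T * c / Real.sqrt B))
      atTop (𝓝 1) := by
    apply tendsto_stdNormalCDF_atTop.comp
    have h := tendsto_nat_sqrt_atTop.atTop_mul_const (div_pos hc (Real.sqrt_pos.2 hB))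
    simpa [mul_div_assoc] using h
  intro ε hε
  have hev_cdf : ∀ᶠ T : ℕ in atTop,
      1 - ε < stdNormalCDF (Real.sqrt T * c / Real.sqrt B) :=
    hcdf_lim.eventually (eventually_gt_nhds (by linarith))
  set g : ℕ → ENNReal := fun T =>
    (∑ j : Fin p, P {ω | thetahat T ω j * muhat T ω j ≤ c}) +
      ∑ i : Fin p, ∑ j : Fin p,
        P {ω | B ≤ thetahat T ω i * thetahat T ω j * |Vhat T ω i j|} with hgdef
  have hg0 : Tendsto g atTop (𝓝 0) := by
    rw [show (0 : ENNReal) = 0 + 0 by simp]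
    apply Tendsto.add
    · rw [show (0 : ENNReal) = ∑ _j : Fin p, (0 : ENNReal) by simp]
      exact tendsto_finset_sum _ fun j _ => (hTM j).prob_le_zero (hcj j)
    · rw [show (0 : ENNReal) = ∑ _i : Fin p, ∑ _j : Fin p, (0 : ENNReal) by simp]
      exact tendsto_finset_sum _ fun i _ => tendsto_finset_sum _ fun j _ =>
        (hTVT i j).prob_ge_zero (hBij i j)
  apply tendsto_zero_of_le_ev _ hg0
  filter_upwards [hev_cdf] with T hT
  have hsub : {ω | ε < |Qstat Ψ ψt a ΨL ΨR K muhat Vhat thetahat T ω - 1|} ⊆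
      ({ω | ¬ (Vhat T ω).PosSemidef} ∪ {ω | ¬ ∀ j, 0 < thetahat T ω j}) ∪
      ((⋃ j, {ω | thetahat T ω j * muhat T ω j ≤ c}) ∪
        ⋃ i, ⋃ j, {ω | B ≤ thetahat T ω i * thetahat T ω j * |Vhat T ω i j|}) := by
    intro ω hω
    by_contra hcon
    simp only [Set.mem_union, Set.mem_iUnion, Set.mem_setOf_eq, not_or, not_exists, not_le,
      not_not, not_lt] at hcon
    obtain ⟨⟨hPSD', hθ'⟩, hcm', hBm'⟩ := hcon
    have hQlow := core_bound Ψ ψt a ΨL ΨR K muhat thetahat Vhat hΨ01 hψt_nonpos hjump T ω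
      (hKpos T) hPSD' hθ' hc hB (fun j => (hcm' j).le) (fun i j => (hBm' i j).le)
    have hQhigh : Qstat Ψ ψt a ΨL ΨR K muhat Vhat thetahat T ω ≤ 1 := by
      rw [Qstat]
      split
      · exact stdNormalCDF_le_one _
      · exact le_refl 1
    simp only [Set.mem_setOf_eq] at hω
    have habs : |Qstat Ψ ψt a ΨL ΨR K muhat Vhat thetahat T ω - 1| < ε := by
      rw [abs_lt]
      constructor <;> [linarith; linarith]
    linarith
  have h1 : P {ω | ¬ (Vhat T ω).PosSemidef} = 0 := ae_iff.1 (hVhatPSD T)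
  have h2 : P {ω | ¬ ∀ j, 0 < thetahat T ω j} = 0 := ae_iff.1 (hthetahatpos T)
  calc P {ω | ε < |Qstat Ψ ψt a ΨL ΨR K muhat Vhat thetahat T ω - 1|}
      ≤ P (({ω | ¬ (Vhat T ω).PosSemidef} ∪ {ω | ¬ ∀ j, 0 < thetahat T ω j}) ∪
        ((⋃ j, {ω | thetahat T ω j * muhat T ω j ≤ c}) ∪
          ⋃ i, ⋃ j, {ω | B ≤ thetahat T ω i * thetahat T ω j * |Vhat T ω i j|})) :=
        measure_mono hsub
    _ ≤ (P {ω | ¬ (Vhat T ω).PosSemidef} + P {ω | ¬ ∀ j, 0 < thetahat T ω j}) +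
        (P (⋃ j, {ω | thetahat T ω j * muhat T ω j ≤ c}) +
          P (⋃ i, ⋃ j, {ω | B ≤ thetahat T ω i * thetahat T ω j * |Vhat T ω i j|})) :=
        le_trans (measure_union_le _ _)
          (add_le_add (measure_union_le _ _) (measure_union_le _ _))
    _ ≤ (0 + 0) + ((∑ j : Fin p, P {ω | thetahat T ω j * muhat T ω j ≤ c}) +
        ∑ i : Fin p, ∑ j : Fin p,
          P {ω | B ≤ thetahat T ω i * thetahat T ω j * |Vhat T ω i j|}) := by
        rw [h1, h2]
        refine add_le_add le_rfl (add_le_add (measure_iUnion_fintype_le _ _) ?_)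
        refine le_trans (measure_iUnion_fintype_le _ _) ?_
        exact Finset.sum_le_sum fun i _ => measure_iUnion_fintype_le _ _
    _ = g T := by rw [hgdef]; simp

end
end
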